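/- arXiv:1111.3162 — 6 statements merged into one kernel-verified Lean document; each statement's English description precedes it below -/
import Mathlib

section
/- Let N^d(μ, σ²) be the discretized normal distribution with mass P(z − 1/2 ≤ Z_{μ,σ²} < z + 1/2) at z ∈ ℤ, and let Ñ^d(μ, σ²) be the alternative discretization with mass P(z ≤ Z_{μ,σ²} < z + 1) at z ∈ ℤ, where Z_{μ,σ²} ~ N(μ, σ²). Then d_TV(N^d(μ, σ²), Ñ^d(μ, σ²)) = d_TV(N^d(μ, σ²), N^d(μ − 1/2, σ²)) ≤ d_TV(N(μ, σ²), N(μ − 1/2, σ²)) ≤ c/σ for an absolute constant c > 0. -/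
open MeasureTheory ProbabilityTheory Real
open scoped NNReal ENNReal

noncomputable def tvDist {α : Type*} [MeasurableSpace α] (μ ν : Measure α) : ℝ :=
  ⨆ A : {A : Set α // MeasurableSet A}, |(μ A).toReal - (ν A).toReal|

noncomputable def discretizedNormal (m : ℝ) (v : ℝ≥0) : Measure ℝ :=
  Measure.sum fun z : ℤ =>
    (gaussianReal m v (Set.Ico ((z : ℝ) - 1/2) ((z : ℝ) + 1/2))) • Measure.dirac (z : ℝ)

/-- The alternative discretization `Ñ^d(m, v)`, with mass `P(z ≤ Z < z + 1)` at `z ∈ ℤ`. -/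
noncomputable def discretizedNormalAlt (m : ℝ) (v : ℝ≥0) : Measure ℝ :=
  Measure.sum fun z : ℤ =>
    (gaussianReal m v (Set.Ico (z : ℝ) ((z : ℝ) + 1))) • Measure.dirac (z : ℝ)

section Aux

open Set

/-- Shift relation between two gaussians. -/
lemma gauss_shift (m : ℝ) (v : ℝ≥0) {s : Set ℝ} (hs : MeasurableSet s) :
    gaussianReal m v s = gaussianReal (m - 1/2) v ((fun x : ℝ => x + 1/2) ⁻¹' s) := by
  conv_lhs => rw [show m = (m - 1/2) + 1/2 by ring, ← gaussianReal_map_add_const (1/2)]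
  rw [Measure.map_apply (measurable_add_const _) hs]

lemma alt_eq (m : ℝ) (v : ℝ≥0) :
    discretizedNormalAlt m v = discretizedNormal (m - 1/2) v := by
  unfold discretizedNormalAlt discretizedNormal
  refine congrArg Measure.sum (funext fun z => ?_)
  congr 1
  rw [gauss_shift m v measurableSet_Ico]
  have hset : ((fun x : ℝ => x + 1/2) ⁻¹' Ico ((z : ℝ)) ((z : ℝ) + 1))
      = Ico ((z : ℝ) - 1/2) ((z : ℝ) + 1/2) := by
    ext x
    simp only [mem_preimage, mem_Ico]
    constructor <;> rintro ⟨h1, h2⟩ <;> constructor <;> linarith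
  rw [hset]

lemma round_preim (z : ℤ) :
    (fun x : ℝ => round x) ⁻¹' {z} = Ico ((z : ℝ) - 1/2) ((z : ℝ) + 1/2) := by
  ext x
  simp only [mem_preimage, mem_singleton_iff, mem_Ico, round_eq, Int.floor_eq_iff]
  constructor <;> rintro ⟨h1, h2⟩ <;> constructor <;> push_cast at * <;> linarith

lemma measurable_roundCast : Measurable (fun x : ℝ => (round x : ℝ)) := by
  have h1 : Measurable (round : ℝ → ℤ) := by
    have : (round : ℝ → ℤ) = fun x => ⌊x + 1/2⌋ := funext round_eq
    rw [this]
    exact Int.measurable_floor.comp (measurable_id.add_const _)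
  exact measurable_from_top.comp h1

lemma discretizedNormal_eq_map (m : ℝ) (v : ℝ≥0) :
    discretizedNormal m v = (gaussianReal m v).map (fun x : ℝ => (round x : ℝ)) := by
  ext s hs
  rw [Measure.map_apply measurable_roundCast hs, discretizedNormal,
    Measure.sum_apply _ hs]
  have hcover : (fun x : ℝ => (round x : ℝ)) ⁻¹' s
      = ⋃ z : ℤ, ((fun x : ℝ => round x) ⁻¹' {z} ∩ (fun x : ℝ => (round x : ℝ)) ⁻¹' s) := by
    ext x
    simp only [mem_iUnion, mem_inter_iff, mem_preimage, mem_singleton_iff]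
    constructor
    · intro hx; exact ⟨round x, rfl, hx⟩
    · rintro ⟨z, _, hx⟩; exact hx
  rw [hcover, measure_iUnion]
  · refine tsum_congr fun z => ?_
    rw [Measure.smul_apply, Measure.dirac_apply' _ hs, smul_eq_mul]
    by_cases h : (z : ℝ) ∈ s
    · have hz : ((fun x : ℝ => round x) ⁻¹' {z} ∩ (fun x : ℝ => (round x : ℝ)) ⁻¹' s)
          = Ico ((z : ℝ) - 1/2) ((z : ℝ) + 1/2) := by
        rw [← round_preim]
        ext x
        simp only [mem_inter_iff, mem_preimage, mem_singleton_iff, and_iff_left_iff_imp]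
        intro hx; rw [hx]; exact h
      rw [hz]
      simp [h]
    · have hz : ((fun x : ℝ => round x) ⁻¹' {z} ∩ (fun x : ℝ => (round x : ℝ)) ⁻¹' s)
          = ∅ := by
        ext x
        simp only [mem_inter_iff, mem_preimage, mem_singleton_iff, mem_empty_iff_false,
          iff_false, not_and]
        intro hx; rw [hx]; exact h
      rw [hz]
      simp [h]
  · intro i j hij
    refine Disjoint.mono inter_subset_left inter_subset_left ?_
    exact Disjoint.preimage _ (disjoint_singleton.2 hij)
  · intro z
    have : MeasurableSet ((fun x : ℝ => round x) ⁻¹' {z}) := by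
      rw [round_preim]; exact measurableSet_Ico
    exact this.inter (measurable_roundCast hs)

lemma toReal_prob_le_one {α : Type*} [MeasurableSpace α] (μ : Measure α)
    [IsProbabilityMeasure μ] (A : Set α) : (μ A).toReal ≤ 1 := by
  simpa using ENNReal.toReal_mono ENNReal.one_ne_top prob_le_one

lemma tvDist_bdd {α : Type*} [MeasurableSpace α] (μ ν : Measure α)
    [IsProbabilityMeasure μ] [IsProbabilityMeasure ν] :
    BddAbove (Set.range fun A : {A : Set α // MeasurableSet A} =>
      |(μ A).toReal - (ν A).toReal|) := by
  refine ⟨1, ?_⟩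
  rintro x ⟨A, rfl⟩
  have h1 := toReal_prob_le_one μ A
  have h2 := toReal_prob_le_one ν A
  have h3 : 0 ≤ (μ (A : Set α)).toReal := ENNReal.toReal_nonneg
  have h4 : 0 ≤ (ν (A : Set α)).toReal := ENNReal.toReal_nonneg
  rw [abs_le]; constructor <;> linarith

lemma tvDist_le_of {α : Type*} [MeasurableSpace α] (μ ν : Measure α) {C : ℝ}
    (h : ∀ A : Set α, MeasurableSet A → |(μ A).toReal - (ν A).toReal| ≤ C) :
    tvDist μ ν ≤ C := by
  haveI : Nonempty {A : Set α // MeasurableSet A} := ⟨⟨∅, MeasurableSet.empty⟩⟩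
  exact ciSup_le fun A => h A.1 A.2

lemma tvDist_map_le {α : Type*} [MeasurableSpace α] (μ ν : Measure α)
    [IsProbabilityMeasure μ] [IsProbabilityMeasure ν] {f : α → α} (hf : Measurable f) :
    tvDist (μ.map f) (ν.map f) ≤ tvDist μ ν := by
  refine tvDist_le_of _ _ fun A hA => ?_
  rw [Measure.map_apply hf hA, Measure.map_apply hf hA]
  exact le_ciSup_of_le (tvDist_bdd μ ν) ⟨f ⁻¹' A, hf hA⟩ le_rfl

end Aux

section Gauss

open Set

variable {m σ : ℝ}

lemma v_ne_zero (hσ : 0 < σ) : (σ ^ 2).toNNReal ≠ 0 := by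
  simp only [ne_eq, Real.toNNReal_eq_zero, not_le]
  positivity

lemma v_coe (hσ : 0 < σ) : (((σ ^ 2).toNNReal : ℝ≥0) : ℝ) = σ ^ 2 :=
  Real.coe_toNNReal _ (sq_nonneg σ)

lemma gauss_pdf_le (m : ℝ) (hσ : 0 < σ) (x : ℝ) :
    gaussianPDFReal m (σ ^ 2).toNNReal x ≤ σ⁻¹ := by
  rw [gaussianPDFReal, v_coe hσ]
  have h1 : rexp (-(x - m) ^ 2 / (2 * σ ^ 2)) ≤ 1 := by
    rw [Real.exp_le_one_iff]
    apply div_nonpos_of_nonpos_of_nonneg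
    · simpa using sq_nonneg (x - m)
    · positivity
  have h2 : (√(2 * π * σ ^ 2))⁻¹ ≤ σ⁻¹ := by
    apply inv_anti₀ hσ
    have : σ = √(σ ^ 2) := by rw [Real.sqrt_sq hσ.le]
    rw [this]
    apply Real.sqrt_le_sqrt
    nlinarith [Real.pi_gt_three]
  calc (√(2 * π * σ ^ 2))⁻¹ * rexp (-(x - m) ^ 2 / (2 * σ ^ 2))
      ≤ (√(2 * π * σ ^ 2))⁻¹ * 1 := by
        apply mul_le_mul_of_nonneg_left h1 (by positivity)
    _ ≤ σ⁻¹ := by rw [mul_one]; exact h2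

lemma gauss_apply_toReal (m' : ℝ) (hσ : 0 < σ) (s : Set ℝ) :
    ((gaussianReal m' (σ ^ 2).toNNReal) s).toReal
      = ∫ x in s, gaussianPDFReal m' (σ ^ 2).toNNReal x := by
  rw [gaussianReal_apply_eq_integral _ (v_ne_zero hσ),
    ENNReal.toReal_ofReal (integral_nonneg fun x => gaussianPDFReal_nonneg _ _ _)]

lemma gauss_interval_le (m' : ℝ) (hσ : 0 < σ) {a b : ℝ} (hab : a ≤ b) :
    ((gaussianReal m' (σ ^ 2).toNNReal) (Ioc a b)).toReal ≤ (b - a) * σ⁻¹ := by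
  rw [gauss_apply_toReal m' hσ]
  calc ∫ x in Ioc a b, gaussianPDFReal m' (σ ^ 2).toNNReal x
      ≤ ∫ _x in Ioc a b, σ⁻¹ :=
        setIntegral_mono_on (integrable_gaussianPDFReal _ _).integrableOn
          (integrableOn_const measure_Ioc_lt_top.ne) measurableSet_Ioc
          (fun x _ => gauss_pdf_le m' hσ x)
    _ = (b - a) * σ⁻¹ := by
        rw [setIntegral_const, smul_eq_mul, measureReal_def, Real.volume_Ioc,
          ENNReal.toReal_ofReal (by linarith)]

lemma gauss_diff_le (m : ℝ) (hσ : 0 < σ) {A : Set ℝ} (hA : MeasurableSet A) :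
    ((gaussianReal m (σ ^ 2).toNNReal) A).toReal
      - ((gaussianReal (m - 1/2) (σ ^ 2).toNNReal) A).toReal ≤ 1 / (2 * σ) := by
  set v := (σ ^ 2).toNNReal with hvdef
  have hv : v ≠ 0 := v_ne_zero hσ
  have hvpos : (0 : ℝ) < (v : ℝ) := by rw [hvdef, v_coe hσ]; positivity
  set f := gaussianPDFReal m v with hf
  set g := gaussianPDFReal (m - 1/2) v with hg
  have hfint : Integrable f := integrable_gaussianPDFReal _ _
  have hgint : Integrable g := integrable_gaussianPDFReal _ _
  set S : Set ℝ := Ioi (m - 1/4) with hS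
  -- pointwise comparison of densities
  have hcomp : ∀ x : ℝ, (m - 1/4 ≤ x → g x ≤ f x) ∧ (x ≤ m - 1/4 → f x ≤ g x) := by
    intro x
    have hC : (0 : ℝ) ≤ (√(2 * π * v))⁻¹ := by positivity
    have h2v : (0 : ℝ) < 2 * v := by linarith
    constructor
    · intro hx
      rw [hf, hg, gaussianPDFReal, gaussianPDFReal]
      apply mul_le_mul_of_nonneg_left _ hC
      rw [Real.exp_le_exp, div_le_div_iff_of_pos_right h2v]
      nlinarith
    · intro hx
      rw [hf, hg, gaussianPDFReal, gaussianPDFReal]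
      apply mul_le_mul_of_nonneg_left _ hC
      rw [Real.exp_le_exp, div_le_div_iff_of_pos_right h2v]
      nlinarith
  have hsub : Integrable (fun x => f x - g x) := hfint.sub hgint
  have key : ∀ s : Set ℝ, ((gaussianReal m v) s).toReal - ((gaussianReal (m - 1/2) v) s).toReal
      = ∫ x in s, (f x - g x) := by
    intro s
    rw [gauss_apply_toReal m hσ, gauss_apply_toReal (m - 1/2) hσ,
      ← integral_sub hfint.integrableOn hgint.integrableOn]
  rw [key]
  have step1 : ∫ x in A, (f x - g x) ≤ ∫ x in S, (f x - g x) := by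
    have hAS : (∫ x in A ∩ S, (f x - g x)) + ∫ x in A \ S, (f x - g x) = ∫ x in A, (f x - g x) :=
      integral_inter_add_diff measurableSet_Ioi hsub.integrableOn
    have hneg : ∫ x in A \ S, (f x - g x) ≤ 0 := by
      apply setIntegral_nonpos_of_ae_restrict
      refine (ae_restrict_iff' (hA.diff measurableSet_Ioi)).2 (ae_of_all _ fun x hx => ?_)
      have hxS : x ∉ S := hx.2
      rw [hS, mem_Ioi, not_lt] at hxS
      have := (hcomp x).2 hxS
      show f x - g x ≤ 0
      linarith
    have hmono : ∫ x in A ∩ S, (f x - g x) ≤ ∫ x in S, (f x - g x) := by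
      apply setIntegral_mono_set hsub.integrableOn
      · refine (ae_restrict_iff' measurableSet_Ioi).2 (ae_of_all _ fun x hx => ?_)
        rw [mem_Ioi] at hx
        have := (hcomp x).1 hx.le
        show 0 ≤ f x - g x
        linarith
      · exact HasSubset.Subset.eventuallyLE inter_subset_right
    linarith
  refine step1.trans ?_
  rw [← key]
  have hshift : (gaussianReal m v) S = (gaussianReal (m - 1/2) v) (Ioi (m - 3/4)) := by
    rw [gauss_shift m v measurableSet_Ioi]
    congr 1
    ext x
    simp only [mem_preimage, mem_Ioi]
    constructor <;> intro h <;> linarith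
  rw [hshift]
  have hunion : (gaussianReal (m - 1/2) v) (Ioi (m - 3/4))
      = (gaussianReal (m - 1/2) v) (Ioc (m - 3/4) (m - 1/4)) + (gaussianReal (m - 1/2) v) S := by
    rw [hS, ← measure_union _ measurableSet_Ioi]
    · rw [Ioc_union_Ioi_eq_Ioi (by linarith)]
    · exact Ioc_disjoint_Ioi le_rfl
  rw [hunion, ENNReal.toReal_add (measure_ne_top _ _) (measure_ne_top _ _)]
  have := gauss_interval_le (σ := σ) (m - 1/2) hσ (a := m - 3/4) (b := m - 1/4) (by linarith)
  have hhalf : (m - 1/4 - (m - 3/4)) = 1/2 := by ring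
  rw [hhalf] at this
  rw [hvdef] at *
  calc ((gaussianReal (m - 1/2) (σ ^ 2).toNNReal) (Ioc (m - 3/4) (m - 1/4))).toReal
        + ((gaussianReal (m - 1/2) (σ ^ 2).toNNReal) S).toReal
        - ((gaussianReal (m - 1/2) (σ ^ 2).toNNReal) S).toReal
      = ((gaussianReal (m - 1/2) (σ ^ 2).toNNReal) (Ioc (m - 3/4) (m - 1/4))).toReal := by ring
    _ ≤ 1/2 * σ⁻¹ := this
    _ = 1 / (2 * σ) := by field_simp

end Gauss

/-- comparison of the two discretizations of the normal distribution. -/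
theorem stmt1 :
    ∃ c > 0, ∀ (m σ : ℝ), 0 < σ →
      (tvDist (discretizedNormal m (σ ^ 2).toNNReal) (discretizedNormalAlt m (σ ^ 2).toNNReal)
        = tvDist (discretizedNormal m (σ ^ 2).toNNReal)
            (discretizedNormal (m - 1/2) (σ ^ 2).toNNReal)) ∧
      tvDist (discretizedNormal m (σ ^ 2).toNNReal) (discretizedNormalAlt m (σ ^ 2).toNNReal)
        ≤ tvDist (gaussianReal m (σ ^ 2).toNNReal) (gaussianReal (m - 1/2) (σ ^ 2).toNNReal) ∧
      tvDist (gaussianReal m (σ ^ 2).toNNReal) (gaussianReal (m - 1/2) (σ ^ 2).toNNReal)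
        ≤ c / σ := by
  refine ⟨1, one_pos, fun m σ hσ => ⟨?_, ?_, ?_⟩⟩
  · rw [alt_eq]
  · rw [alt_eq, discretizedNormal_eq_map, discretizedNormal_eq_map]
    exact tvDist_map_le _ _ measurable_roundCast
  · have key : ∀ A : Set ℝ, MeasurableSet A →
        |((gaussianReal m (σ ^ 2).toNNReal) A).toReal
          - ((gaussianReal (m - 1/2) (σ ^ 2).toNNReal) A).toReal| ≤ 1 / (2 * σ) := by
      intro A hA
      rw [abs_le]
      constructor
      · have h1 := gauss_diff_le (σ := σ) m hσ hA.compl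
        have h2 : ((gaussianReal m (σ ^ 2).toNNReal) Aᶜ).toReal
            = 1 - ((gaussianReal m (σ ^ 2).toNNReal) A).toReal := by
          rw [prob_compl_eq_one_sub hA,
            ENNReal.toReal_sub_of_le prob_le_one ENNReal.one_ne_top, ENNReal.toReal_one]
        have h3 : ((gaussianReal (m - 1/2) (σ ^ 2).toNNReal) Aᶜ).toReal
            = 1 - ((gaussianReal (m - 1/2) (σ ^ 2).toNNReal) A).toReal := by
          rw [prob_compl_eq_one_sub hA,
            ENNReal.toReal_sub_of_le prob_le_one ENNReal.one_ne_top, ENNReal.toReal_one]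
        rw [h2, h3] at h1
        linarith
      · exact gauss_diff_le (σ := σ) m hσ hA
    refine (tvDist_le_of _ _ key).trans ?_
    rw [div_le_div_iff₀ (by linarith) hσ]
    nlinarith
end

section
/- Let V be an integer valued random variable and let (V, V') be an exchangeable pair defined on the same probability space with P(V − V' = 1) ≠ 0. Then d_TV(L(V), L(V+1)) ≤ [√(Var(E(I(V − V' = 1) | V))) + √(Var(E(I(V − V' = −1) | V)))] / P(V − V' = 1). -/
open MeasureTheory ProbabilityTheory Real
open scoped NNReal ENNReal

lemma l1_le_sqrt_l2 {Ω : Type} [MeasurableSpace Ω] (P : Measure Ω)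
    [IsProbabilityMeasure P] (Z : Ω → ℝ) (hZ : MemLp Z 2 P) :
    ∫ ω, |Z ω| ∂P ≤ Real.sqrt (∫ ω, (Z ω) ^ 2 ∂P) := by
  have hZ1 : Integrable Z P := hZ.integrable one_le_two
  have hZsq : Integrable (fun ω => (Z ω) ^ 2) P := hZ.integrable_sq
  set S := ∫ ω, (Z ω) ^ 2 ∂P with hS
  have hS0 : 0 ≤ S := integral_nonneg fun ω => sq_nonneg _
  refine le_of_forall_pos_le_add fun ε hε => ?_
  set t : ℝ := Real.sqrt S + ε with ht
  have ht0 : 0 < t := by positivity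
  have hpt : ∀ ω, |Z ω| ≤ ((Z ω) ^ 2 + t ^ 2) / (2 * t) := by
    intro ω
    rw [le_div_iff₀ (by positivity)]
    nlinarith [sq_nonneg (|Z ω| - t), sq_abs (Z ω)]
  have hint : Integrable (fun ω => ((Z ω) ^ 2 + t ^ 2) / (2 * t)) P :=
    (hZsq.add (integrable_const _)).div_const _
  have h1 : ∫ ω, |Z ω| ∂P ≤ ∫ ω, ((Z ω) ^ 2 + t ^ 2) / (2 * t) ∂P :=
    integral_mono hZ1.abs hint hpt
  have h2 : ∫ ω, ((Z ω) ^ 2 + t ^ 2) / (2 * t) ∂P = (S + t ^ 2) / (2 * t) := by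
    rw [integral_div, integral_add hZsq (integrable_const _), integral_const]
    simp [smul_eq_mul, hS]
  rw [h2] at h1
  refine h1.trans ?_
  rw [div_le_iff₀ (by positivity)]
  nlinarith [Real.mul_self_sqrt hS0, Real.sqrt_nonneg S, hε]

/-- Lemma of Röllin and Ross: bounding `d_TV(L(V), L(V+1))` via an
exchangeable pair. -/
theorem stmt2 {Ω : Type} [MeasurableSpace Ω] (P : Measure Ω) [IsProbabilityMeasure P]
    (V V' : Ω → ℤ) (hV : Measurable V) (hV' : Measurable V')
    (hexch : P.map (fun ω => (V ω, V' ω)) = P.map (fun ω => (V' ω, V ω)))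
    (hP : P {ω | V ω - V' ω = 1} ≠ 0) :
    tvDist (P.map V) (P.map (fun ω => V ω + 1)) ≤
      (Real.sqrt (variance (P[(fun ω => if V ω - V' ω = 1 then (1 : ℝ) else 0) |
          MeasurableSpace.comap V inferInstance]) P)
        + Real.sqrt (variance (P[(fun ω => if V ω - V' ω = -1 then (1 : ℝ) else 0) |
          MeasurableSpace.comap V inferInstance]) P))
      / (P {ω | V ω - V' ω = 1}).toReal := by
  classical
  have hm : MeasurableSpace.comap V inferInstance ≤ ‹MeasurableSpace Ω› := hV.comap_le
  set Dp : Set Ω := {ω | V ω - V' ω = 1} with hDp_def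
  set Dm : Set Ω := {ω | V ω - V' ω = -1} with hDm_def
  have hDp : MeasurableSet Dp := (hV.sub hV') (measurableSet_singleton (1 : ℤ))
  have hDm : MeasurableSet Dm := (hV.sub hV') (measurableSet_singleton (-1 : ℤ))
  set F : Ω → ℝ := fun ω => if V ω - V' ω = 1 then 1 else 0 with hF_def
  set G : Ω → ℝ := fun ω => if V ω - V' ω = -1 then 1 else 0 with hG_def
  have hFind : F = Dp.indicator (fun _ => (1 : ℝ)) := by
    funext ω; simp [hF_def, Set.indicator_apply, hDp_def, Set.mem_setOf_eq]
  have hGind : G = Dm.indicator (fun _ => (1 : ℝ)) := by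
    funext ω; simp [hG_def, Set.indicator_apply, hDm_def, Set.mem_setOf_eq]
  have hFint : Integrable F P := by rw [hFind]; exact (integrable_const 1).indicator hDp
  have hGint : Integrable G P := by rw [hGind]; exact (integrable_const 1).indicator hDm
  -- swap lemma
  have hswap : ∀ S : Set (ℤ × ℤ),
      P ((fun ω => (V ω, V' ω)) ⁻¹' S) = P ((fun ω => (V' ω, V ω)) ⁻¹' S) := by
    intro S
    have hSm : MeasurableSet S := (Set.to_countable S).measurableSet
    rw [← Measure.map_apply (hV.prodMk hV') hSm, hexch,
      Measure.map_apply (hV'.prodMk hV) hSm]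
  have hPmp : P Dm = P Dp := by
    have h := hswap {p : ℤ × ℤ | p.1 - p.2 = -1}
    have e1 : (fun ω => (V ω, V' ω)) ⁻¹' {p : ℤ × ℤ | p.1 - p.2 = -1} = Dm := by
      ext ω; simp [hDm_def]
    have e2 : (fun ω => (V' ω, V ω)) ⁻¹' {p : ℤ × ℤ | p.1 - p.2 = -1} = Dp := by
      ext ω; simp only [Set.mem_preimage, Set.mem_setOf_eq, hDp_def]; omega
    rwa [e1, e2] at h
  -- key exchangeability identity
  have key : ∀ A : Set ℤ,
      P (V ⁻¹' A ∩ Dp) = P (V ⁻¹' ((fun v => v + 1) ⁻¹' A) ∩ Dm) := by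
    intro A
    have h := hswap {p : ℤ × ℤ | p.2 + 1 ∈ A ∧ p.1 - p.2 = 1}
    have e1 : (fun ω => (V ω, V' ω)) ⁻¹' {p : ℤ × ℤ | p.2 + 1 ∈ A ∧ p.1 - p.2 = 1}
        = V ⁻¹' A ∩ Dp := by
      ext ω
      simp only [Set.mem_preimage, Set.mem_setOf_eq, Set.mem_inter_iff, hDp_def]
      constructor
      · rintro ⟨h1, h2⟩
        have h3 : V' ω + 1 = V ω := by omega
        rw [h3] at h1; exact ⟨h1, h2⟩
      · rintro ⟨h1, h2⟩
        have h3 : V' ω + 1 = V ω := by omega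
        rw [h3]; exact ⟨h1, h2⟩
    have e2 : (fun ω => (V' ω, V ω)) ⁻¹' {p : ℤ × ℤ | p.2 + 1 ∈ A ∧ p.1 - p.2 = 1}
        = V ⁻¹' ((fun v => v + 1) ⁻¹' A) ∩ Dm := by
      ext ω
      simp only [Set.mem_preimage, Set.mem_setOf_eq, Set.mem_inter_iff, hDm_def]
      constructor
      · rintro ⟨h1, h2⟩; exact ⟨h1, by omega⟩
      · rintro ⟨h1, h2⟩; exact ⟨h1, by omega⟩
    rwa [e1, e2] at h
  -- set integrals of F and G
  have hFset : ∀ s : Set Ω, ∫ ω in s, F ω ∂P = (P (s ∩ Dp)).toReal := by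
    intro s
    rw [hFind, setIntegral_indicator hDp, setIntegral_const]
    simp [smul_eq_mul]; rfl
  have hGset : ∀ s : Set Ω, ∫ ω in s, G ω ∂P = (P (s ∩ Dm)).toReal := by
    intro s
    rw [hGind, setIntegral_indicator hDm, setIntegral_const]
    simp [smul_eq_mul]; rfl
  have hmeasB : ∀ B : Set ℤ,
      MeasurableSet[MeasurableSpace.comap V inferInstance] (V ⁻¹' B) :=
    fun B => ⟨B, (Set.to_countable B).measurableSet, rfl⟩
  set c : ℝ := (P Dp).toReal with hc_def
  have hc0 : 0 < c := ENNReal.toReal_pos hP (measure_ne_top P _)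
  have hEF : ∫ ω, F ω ∂P = c := by
    have h := hFset Set.univ
    rwa [setIntegral_univ, Set.univ_inter] at h
  have hEG : ∫ ω, G ω ∂P = c := by
    have h := hGset Set.univ
    rw [setIntegral_univ, Set.univ_inter] at h
    rw [h, hPmp]
  have hEF' : ∫ ω, (P[F|MeasurableSpace.comap V inferInstance]) ω ∂P = c := by
    rw [integral_condExp hm]; exact hEF
  have hEG' : ∫ ω, (P[G|MeasurableSpace.comap V inferInstance]) ω ∂P = c := by
    rw [integral_condExp hm]; exact hEG
  -- MemLp 2 of conditional expectations
  have hmem : ∀ H : Ω → ℝ, Integrable H P → (∀ ω, H ω ∈ Set.Icc (0:ℝ) 1) →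
      MemLp (P[H|MeasurableSpace.comap V inferInstance]) 2 P := by
    intro H hHint hH01
    have h0 : 0 ≤ᵐ[P] P[H|MeasurableSpace.comap V inferInstance] :=
      condExp_nonneg (ae_of_all _ fun ω => (hH01 ω).1)
    have h1 : P[H|MeasurableSpace.comap V inferInstance] ≤ᵐ[P] fun _ => (1:ℝ) := by
      have h := condExp_mono (μ := P) (m := MeasurableSpace.comap V inferInstance)
        hHint (integrable_const 1) (ae_of_all _ fun ω => (hH01 ω).2)
      rwa [condExp_const hm (1:ℝ)] at h
    refine MemLp.of_bound (stronglyMeasurable_condExp.mono hm).aestronglyMeasurable 1 ?_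
    filter_upwards [h0, h1] with ω h0ω h1ω
    rw [Real.norm_eq_abs, abs_le]
    simp only [Pi.zero_apply] at h0ω
    exact ⟨by linarith, h1ω⟩
  have hF01 : ∀ ω, F ω ∈ Set.Icc (0:ℝ) 1 := by
    intro ω; simp only [hF_def]; split <;> norm_num
  have hG01 : ∀ ω, G ω ∈ Set.Icc (0:ℝ) 1 := by
    intro ω; simp only [hG_def]; split <;> norm_num
  have hFmem : MemLp (P[F|MeasurableSpace.comap V inferInstance]) 2 P := hmem F hFint hF01
  have hGmem : MemLp (P[G|MeasurableSpace.comap V inferInstance]) 2 P := hmem G hGint hG01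
  -- deviation bound
  have hvar : ∀ H : Ω → ℝ, MemLp H 2 P → (∫ ω, H ω ∂P = c) →
      ∫ ω, |H ω - c| ∂P ≤ Real.sqrt (variance H P) := by
    intro H hH hEH
    have h := l1_le_sqrt_l2 P (fun ω => H ω - c) (hH.sub (memLp_const c))
    have hveq : variance H P = ∫ ω, (H ω - c) ^ 2 ∂P := by
      rw [variance_eq_integral hH.aestronglyMeasurable.aemeasurable]
      congr 1
      funext ω
      simp [hEH]
    rw [hveq]
    exact h
  set IF := ∫ ω, |(P[F|MeasurableSpace.comap V inferInstance]) ω - c| ∂P with hIF_def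
  set IG := ∫ ω, |(P[G|MeasurableSpace.comap V inferInstance]) ω - c| ∂P with hIG_def
  have hIFle : IF ≤ Real.sqrt (variance (P[F|MeasurableSpace.comap V inferInstance]) P) :=
    hvar _ hFmem hEF'
  have hIGle : IG ≤ Real.sqrt (variance (P[G|MeasurableSpace.comap V inferInstance]) P) :=
    hvar _ hGmem hEG'
  -- per set bound
  have hbound : ∀ A : Set ℤ,
      |((P.map V) A).toReal - ((P.map (fun ω => V ω + 1)) A).toReal| * c ≤ IF + IG := by
    intro A
    have hA : MeasurableSet A := (Set.to_countable A).measurableSet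
    set A1 : Set ℤ := (fun v => v + 1) ⁻¹' A with hA1_def
    have hmapV : ((P.map V) A).toReal = (P (V ⁻¹' A)).toReal := by
      rw [Measure.map_apply hV hA]
    have hmapV1 : ((P.map (fun ω => V ω + 1)) A).toReal = (P (V ⁻¹' A1)).toReal := by
      rw [Measure.map_apply (hV.add_const 1) hA]
      rfl
    set a : ℝ := (P (V ⁻¹' A)).toReal with ha_def
    set b : ℝ := (P (V ⁻¹' A1)).toReal with hb_def
    have hsF : ∫ ω in V ⁻¹' A, (c - (P[F|MeasurableSpace.comap V inferInstance]) ω) ∂P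
        = c * a - (P (V ⁻¹' A ∩ Dp)).toReal := by
      rw [integral_sub (integrableOn_const (C := c) (measure_ne_top _ _))
        integrable_condExp.integrableOn, setIntegral_const,
        setIntegral_condExp hm hFint (hmeasB A), hFset]
      simp [smul_eq_mul, mul_comm]; exact Or.inl rfl
    have hsG : ∫ ω in V ⁻¹' A1, (c - (P[G|MeasurableSpace.comap V inferInstance]) ω) ∂P
        = c * b - (P (V ⁻¹' A1 ∩ Dm)).toReal := by
      rw [integral_sub (integrableOn_const (C := c) (measure_ne_top _ _))
        integrable_condExp.integrableOn, setIntegral_const,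
        setIntegral_condExp hm hGint (hmeasB A1), hGset]
      simp [smul_eq_mul, mul_comm]; exact mul_comm _ _
    have hkey : (P (V ⁻¹' A ∩ Dp)).toReal = (P (V ⁻¹' A1 ∩ Dm)).toReal := by
      rw [key A]
    have hdiff : c * a - c * b
        = (∫ ω in V ⁻¹' A, (c - (P[F|MeasurableSpace.comap V inferInstance]) ω) ∂P)
          - ∫ ω in V ⁻¹' A1, (c - (P[G|MeasurableSpace.comap V inferInstance]) ω) ∂P := by
      rw [hsF, hsG, hkey]; ring
    have habs : ∀ (H : Ω → ℝ), Integrable H P → ∀ s : Set Ω,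
        |∫ ω in s, (c - H ω) ∂P| ≤ ∫ ω, |H ω - c| ∂P := by
      intro H hH s
      have h1 : |∫ ω in s, (c - H ω) ∂P| ≤ ∫ ω in s, |c - H ω| ∂P := by
        have h := norm_integral_le_integral_norm (μ := P.restrict s) (f := fun ω => c - H ω)
        simpa [Real.norm_eq_abs] using h
      refine h1.trans ?_
      have h2 : ∫ ω in s, |c - H ω| ∂P ≤ ∫ ω, |c - H ω| ∂P :=
        setIntegral_le_integral ((integrable_const c).sub hH).abs
          (ae_of_all _ fun ω => abs_nonneg _)
      refine h2.trans_eq ?_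
      congr 1
      funext ω
      rw [abs_sub_comm]
    have hF1 : |∫ ω in V ⁻¹' A,
        (c - (P[F|MeasurableSpace.comap V inferInstance]) ω) ∂P| ≤ IF :=
      habs _ integrable_condExp _
    have hG1 : |∫ ω in V ⁻¹' A1,
        (c - (P[G|MeasurableSpace.comap V inferInstance]) ω) ∂P| ≤ IG :=
      habs _ integrable_condExp _
    have hmain : |c * a - c * b| ≤ IF + IG := by
      rw [hdiff]
      exact (abs_sub _ _).trans (add_le_add hF1 hG1)
    calc |((P.map V) A).toReal - ((P.map (fun ω => V ω + 1)) A).toReal| * c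
        = |a - b| * c := by rw [hmapV, hmapV1]
      _ = |c * a - c * b| := by
          rw [show c * a - c * b = (a - b) * c by ring, abs_mul, abs_of_pos hc0]
      _ ≤ IF + IG := hmain
  -- conclude
  rw [tvDist]
  refine Real.iSup_le (fun A => ?_) ?_
  · rw [le_div_iff₀ hc0]
    exact (hbound A.1).trans (add_le_add hIFle hIGle)
  · positivity
end

section
/- Let (S, S') be an exchangeable pair of integer valued random variables with |S' − S| ≤ 1 almost surely, and let λ > 0 be a constant. Let G = (S' − S)/(2λ) and D = S' − S. Then for every function h: ℝ → {0,1} that is constant on each interval [z − 1/2, z + 1/2) for z ∈ ℤ, one has E[ G · ∫₀^D (h(S + t) − h(S)) dt ] = 0. -/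
open MeasureTheory ProbabilityTheory Real
open scoped NNReal ENNReal

set_option maxHeartbeats 1000000 in
lemma stmt11_key (h : ℝ → ℝ) (hval : ∀ x, h x = 0 ∨ h x = 1)
    (hconst : ∀ (z : ℤ) (x : ℝ), (z : ℝ) - 1/2 ≤ x → x < (z : ℝ) + 1/2 → h x = h z)
    (s d : ℤ) (hd : |d| ≤ 1) :
    ∫ t in (0 : ℝ)..((d : ℝ)), (h ((s : ℝ) + t) - h (s : ℝ))
      = (d : ℝ)/2 * (h ((s + d : ℤ) : ℝ) - h (s : ℝ)) := by
  have hb : ∀ x : ℝ, |h x| ≤ 1 := by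
    intro x; rcases hval x with hx | hx <;> simp [hx]
  have hmeas : Measurable h := by
    have heq : h = fun x => h ((⌊x + 1/2⌋ : ℤ) : ℝ) := by
      funext x
      have h1 := Int.floor_le (x + 1/2)
      have h2 := Int.lt_floor_add_one (x + 1/2)
      exact hconst ⌊x + 1/2⌋ x (by linarith) (by linarith)
    rw [heq]
    exact (measurable_of_countable (fun z : ℤ => h (z : ℝ))).comp
      (Int.measurable_floor.comp (measurable_id.add_const _))
  have II : ∀ a b : ℝ, IntervalIntegrable (fun t => h ((s : ℝ) + t) - h (s : ℝ)) volume a b := by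
    intro a b
    rw [intervalIntegrable_iff]
    apply Measure.integrableOn_of_bounded (measure_Ioc_lt_top).ne
      ((hmeas.comp (measurable_const.add measurable_id)).sub measurable_const).aestronglyMeasurable
      (M := 2)
    filter_upwards with t
    have := hb ((s : ℝ) + t); have := hb (s : ℝ)
    rw [Real.norm_eq_abs]
    have := abs_sub ((h ((s : ℝ) + t))) (h (s : ℝ))
    calc |h ((s : ℝ) + t) - h (s : ℝ)| ≤ |h ((s : ℝ) + t)| + |h (s : ℝ)| := abs_sub _ _
      _ ≤ 2 := by linarith
  have hne : ∀ c : ℝ, ∀ᵐ t : ℝ, t ≠ c := by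
    intro c
    have : volume ({c} : Set ℝ) = 0 := Real.volume_singleton
    filter_upwards [measure_eq_zero_iff_ae_notMem.mp this] with t ht
    simpa using ht
  obtain ⟨hd1, hd2⟩ := abs_le.mp hd
  interval_cases d
  · -- d = -1
    push_cast
    have e1 : ∫ t in (-1 : ℝ)..(-1/2 : ℝ), (h ((s : ℝ) + t) - h (s : ℝ))
        = ((-1/2 : ℝ) - (-1)) • (h ((s : ℝ) - 1) - h (s : ℝ)) := by
      rw [← intervalIntegral.integral_const (a := (-1 : ℝ)) (b := (-1/2 : ℝ))
        (c := h ((s : ℝ) - 1) - h (s : ℝ))]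
      apply intervalIntegral.integral_congr_ae
      filter_upwards [hne (-1/2 : ℝ)] with t ht htI
      rw [Set.uIoc_of_le (by norm_num), Set.mem_Ioc] at htI
      have : h ((s : ℝ) + t) = h (((s - 1 : ℤ) : ℝ)) := by
        apply hconst (s - 1)
        · push_cast; linarith [htI.1]
        · push_cast
          rcases lt_or_eq_of_le htI.2 with h' | h'
          · linarith
          · exact absurd h' ht
      rw [this]; push_cast; ring_nf
    have e2 : ∫ t in (-1/2 : ℝ)..(0 : ℝ), (h ((s : ℝ) + t) - h (s : ℝ)) = 0 := by
      refine Eq.trans (intervalIntegral.integral_congr_ae ?_) intervalIntegral.integral_zero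
      filter_upwards with t htI
      rw [Set.uIoc_of_le (by norm_num), Set.mem_Ioc] at htI
      have : h ((s : ℝ) + t) = h (s : ℝ) := by
        apply hconst s <;> [skip; skip] <;> linarith [htI.1, htI.2]
      rw [this]; ring
    have hsplit := intervalIntegral.integral_add_adjacent_intervals
      (II (-1) (-1/2)) (II (-1/2) 0)
    have e3 : ∫ t in (0 : ℝ)..(-1 : ℝ), (h ((s : ℝ) + t) - h (s : ℝ))
        = -∫ t in (-1 : ℝ)..(0 : ℝ), (h ((s : ℝ) + t) - h (s : ℝ)) :=
      (intervalIntegral.integral_symm _ _)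
    rw [e3, ← hsplit, e1, e2]
    push_cast
    simp only [smul_eq_mul]
    ring
  · -- d = 0
    simp
  · -- d = 1
    push_cast
    have e1 : ∫ t in (0 : ℝ)..(1/2 : ℝ), (h ((s : ℝ) + t) - h (s : ℝ)) = 0 := by
      refine Eq.trans (intervalIntegral.integral_congr_ae ?_) intervalIntegral.integral_zero
      filter_upwards [hne (1/2 : ℝ)] with t ht htI
      rw [Set.uIoc_of_le (by norm_num), Set.mem_Ioc] at htI
      have : h ((s : ℝ) + t) = h (s : ℝ) := by
        apply hconst s
        · linarith [htI.1]
        · rcases lt_or_eq_of_le htI.2 with h' | h'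
          · linarith
          · exact absurd h' ht
      rw [this]; ring
    have e2 : ∫ t in (1/2 : ℝ)..(1 : ℝ), (h ((s : ℝ) + t) - h (s : ℝ))
        = ((1 : ℝ) - 1/2) • (h ((s : ℝ) + 1) - h (s : ℝ)) := by
      rw [← intervalIntegral.integral_const (a := (1/2 : ℝ)) (b := (1 : ℝ))
        (c := h ((s : ℝ) + 1) - h (s : ℝ))]
      apply intervalIntegral.integral_congr_ae
      filter_upwards with t htI
      rw [Set.uIoc_of_le (by norm_num), Set.mem_Ioc] at htI
      have : h ((s : ℝ) + t) = h (((s + 1 : ℤ) : ℝ)) := by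
        apply hconst (s + 1)
        · push_cast; linarith [htI.1]
        · push_cast; linarith [htI.2]
      rw [this]; push_cast; ring_nf
    have hsplit := intervalIntegral.integral_add_adjacent_intervals
      (II 0 (1/2)) (II (1/2) 1)
    rw [← hsplit, e1, e2]
    push_cast
    simp only [smul_eq_mul]
    ring

/-- equation (6-c2-2): for an exchangeable pair of integer valued
random variables with `|S' - S| ≤ 1`, the term `E[G ∫₀^D (h(S+t) - h(S)) dt]` vanishes
for every `{0,1}`-valued `h` that is constant on the intervals `[z - 1/2, z + 1/2)`. -/
theorem stmt11 {Ω : Type} [MeasurableSpace Ω] (P : Measure Ω) [IsProbabilityMeasure P]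
    (S S' : Ω → ℤ) (hS : Measurable S) (hS' : Measurable S')
    (hexch : P.map (fun ω => (S ω, S' ω)) = P.map (fun ω => (S' ω, S ω)))
    (hbd : ∀ᵐ ω ∂P, |S' ω - S ω| ≤ 1)
    (lam : ℝ) (hlam : 0 < lam)
    (G : Ω → ℝ) (hG : G = fun ω => ((S' ω : ℝ) - (S ω : ℝ)) / (2 * lam))
    (D : Ω → ℤ) (hD : D = fun ω => S' ω - S ω)
    (h : ℝ → ℝ) (hval : ∀ x, h x = 0 ∨ h x = 1)
    (hconst : ∀ (z : ℤ) (x : ℝ), (z : ℝ) - 1/2 ≤ x → x < (z : ℝ) + 1/2 → h x = h z) :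
    ∫ ω, G ω * (∫ t in (0 : ℝ)..((D ω : ℝ)), (h ((S ω : ℝ) + t) - h ((S ω : ℝ)))) ∂P
      = 0 := by
  set f : ℤ × ℤ → ℝ := fun p =>
    (((p.2 : ℝ) - (p.1 : ℝ)) / (2 * lam)) * (((p.2 : ℝ) - (p.1 : ℝ))/2 * (h (p.2 : ℝ) - h (p.1 : ℝ)))
    with hf_def
  have hf : Measurable f := measurable_of_countable f
  have step1 : ∫ ω, G ω * (∫ t in (0 : ℝ)..((D ω : ℝ)), (h ((S ω : ℝ) + t) - h ((S ω : ℝ)))) ∂P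
      = ∫ ω, f (S ω, S' ω) ∂P := by
    apply integral_congr_ae
    filter_upwards [hbd] with ω hω
    have hkey := stmt11_key h hval hconst (S ω) (S' ω - S ω) hω
    have : ((S ω + (S' ω - S ω) : ℤ) : ℝ) = ((S' ω : ℤ) : ℝ) := by push_cast; ring
    rw [this] at hkey
    rw [hG, hD]
    simp only
    rw [show ((S' ω - S ω : ℤ) : ℝ) = (S' ω : ℝ) - (S ω : ℝ) by push_cast; ring] at hkey ⊢
    rw [hkey, hf_def]
  rw [step1]
  have hpair : AEMeasurable (fun ω => (S ω, S' ω)) P := (hS.prodMk hS').aemeasurable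
  have hpair' : AEMeasurable (fun ω => (S' ω, S ω)) P := (hS'.prodMk hS).aemeasurable
  have e1 : ∫ ω, f (S ω, S' ω) ∂P = ∫ p, f p ∂(P.map (fun ω => (S ω, S' ω))) :=
    (integral_map hpair hf.aestronglyMeasurable).symm
  have e2 : ∫ p, f p ∂(P.map (fun ω => (S' ω, S ω))) = ∫ ω, f (S' ω, S ω) ∂P :=
    integral_map hpair' hf.aestronglyMeasurable
  have e3 : ∫ ω, f (S' ω, S ω) ∂P = -∫ ω, f (S ω, S' ω) ∂P := by
    rw [← integral_neg]
    apply integral_congr_ae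
    filter_upwards with ω
    simp only [hf_def]
    ring
  have e2' : ∫ p, f p ∂(P.map (fun ω => (S ω, S' ω))) = ∫ ω, f (S' ω, S ω) ∂P := by
    rw [hexch]; exact e2
  have : ∫ ω, f (S ω, S' ω) ∂P = -∫ ω, f (S ω, S' ω) ∂P := (e1.trans e2').trans e3
  linarith
end

section
/- Let X be an integer valued random variable. Then there exists an exchangeable pair (X, X') on some probability space, with X' distributed as X, such that P(X − X' = 1) = P(X − X' = −1) = (1/2)·(1 − d_TV(L(X), L(X+1))). -/
open MeasureTheory ProbabilityTheory Real
open scoped NNReal ENNReal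

namespace Mineka

open scoped Classical

noncomputable def m (f : ℤ → ℝ≥0∞) (k : ℤ) : ℝ≥0∞ := min (f k) (f (k + 1))

noncomputable def s (f : ℤ → ℝ≥0∞) : ℝ≥0∞ := ∑' k, m f k

noncomputable def ρ (f : ℤ → ℝ≥0∞) (k : ℤ) : ℝ≥0∞ := f k - (m f (k - 1) / 2 + m f k / 2)

noncomputable def c (f : ℤ → ℝ≥0∞) (k : ℤ) : ℝ≥0∞ :=
  ∑' j, if (Even k ↔ Even j) then ρ f j else 0

noncomputable def q (f : ℤ → ℝ≥0∞) (p : ℤ × ℤ) : ℝ≥0∞ :=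
  (if p.2 = p.1 + 1 then m f p.1 / 2 else 0) + (if p.1 = p.2 + 1 then m f p.2 / 2 else 0) +
    (if (Even p.1 ↔ Even p.2) then ρ f p.1 * ρ f p.2 / c f p.1 else 0)

section lemmas

variable (f : ℤ → ℝ≥0∞)

lemma m_le_left (k : ℤ) : m f k ≤ f k := min_le_left _ _

lemma m_sub_le (k : ℤ) : m f (k - 1) ≤ f k := by
  have : m f (k - 1) ≤ f (k - 1 + 1) := min_le_right _ _
  simpa using this

lemma half_le (k : ℤ) : m f (k - 1) / 2 + m f k / 2 ≤ f k := by
  calc m f (k - 1) / 2 + m f k / 2 ≤ f k / 2 + f k / 2 := by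
        gcongr
        · exact m_sub_le f k
        · exact m_le_left f k
    _ = f k := ENNReal.add_halves _

lemma rho_add (k : ℤ) : ρ f k + (m f (k - 1) / 2 + m f k / 2) = f k :=
  tsub_add_cancel_of_le (half_le f k)

lemma rho_le (k : ℤ) : ρ f k ≤ f k := tsub_le_self

lemma sum_m_shift : ∑' k, m f (k - 1) = s f :=
  (Equiv.subRight (1 : ℤ)).tsum_eq (m f)

lemma sum_rho_add (hf : ∑' k, f k = 1) : (∑' k, ρ f k) + s f = 1 := by
  have h1 : ∑' k, (ρ f k + (m f (k - 1) / 2 + m f k / 2)) = 1 := by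
    rw [tsum_congr (rho_add f), hf]
  have h2 : ∑' k, (ρ f k + (m f (k - 1) / 2 + m f k / 2))
      = (∑' k, ρ f k) + ((∑' k, m f (k - 1) / 2) + ∑' k, m f k / 2) := by
    rw [ENNReal.tsum_add, ENNReal.tsum_add]
  have h3 : ∑' k, m f (k - 1) / 2 = s f / 2 := by
    simp only [div_eq_mul_inv]
    rw [ENNReal.tsum_mul_right, sum_m_shift]
  have h4 : ∑' k, m f k / 2 = s f / 2 := by
    simp only [div_eq_mul_inv]
    rw [ENNReal.tsum_mul_right]; rfl
  rw [h2, h3, h4, ENNReal.add_halves] at h1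
  exact h1

lemma s_le_one (hf : ∑' k, f k = 1) : s f ≤ 1 := by
  calc s f ≤ ∑' k, f k := ENNReal.tsum_le_tsum fun k => min_le_left _ _
    _ = 1 := hf

lemma s_ne_top (hf : ∑' k, f k = 1) : s f ≠ ∞ :=
  ne_top_of_le_ne_top ENNReal.one_ne_top (s_le_one f hf)

lemma rho_le_c (k : ℤ) : ρ f k ≤ c f k := by
  have := ENNReal.le_tsum (f := fun j => if (Even k ↔ Even j) then ρ f j else 0) k
  exact (by simpa using this : ρ f k ≤ ∑' j, if (Even k ↔ Even j) then ρ f j else 0)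

lemma c_le_one (hf : ∑' k, f k = 1) : c f k ≤ 1 := by
  calc c f k ≤ ∑' j, f j := by
        refine ENNReal.tsum_le_tsum fun j => ?_
        split
        · exact rho_le f j
        · exact zero_le
    _ = 1 := hf

lemma c_ne_top (hf : ∑' k, f k = 1) (k : ℤ) : c f k ≠ ∞ :=
  ne_top_of_le_ne_top ENNReal.one_ne_top (c_le_one f hf)

lemma c_congr {i j : ℤ} (h : Even i ↔ Even j) : c f i = c f j := by
  unfold c
  exact tsum_congr fun j' => if_congr (iff_congr h Iff.rfl) rfl rfl

lemma sum_class (i : ℤ) : ∑' j, (if (Even i ↔ Even j) then ρ f j else 0) = c f i := rfl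

lemma rowsum (hf : ∑' k, f k = 1) (i : ℤ) : ∑' j, q f (i, j) = f i := by
  unfold q
  simp only
  rw [ENNReal.tsum_add, ENNReal.tsum_add]
  have hA : ∑' j, (if j = i + 1 then m f i / 2 else 0) = m f i / 2 := tsum_ite_eq _ _
  have hB : ∑' j : ℤ, (if i = j + 1 then m f j / 2 else 0) = m f (i - 1) / 2 := by
    rw [tsum_eq_single (i - 1)]
    · simp
    · intro j hj
      rw [if_neg]
      omega
  have hC : ∑' j, (if (Even i ↔ Even j) then ρ f i * ρ f j / c f i else 0) = ρ f i := by
    have hterm : ∀ j, (if (Even i ↔ Even j) then ρ f i * ρ f j / c f i else 0)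
        = ρ f i / c f i * (if (Even i ↔ Even j) then ρ f j else 0) := by
      intro j
      split
      · rw [div_eq_mul_inv, div_eq_mul_inv, mul_right_comm]
      · simp
    rw [tsum_congr hterm, ENNReal.tsum_mul_left, sum_class]
    by_cases hc : c f i = 0
    · have hρ : ρ f i = 0 := le_antisymm (hc ▸ rho_le_c f i) zero_le
      simp [hc, hρ]
    · exact ENNReal.div_mul_cancel hc (c_ne_top f hf i)
  rw [hA, hB, hC]
  calc m f i / 2 + m f (i - 1) / 2 + ρ f i
      = ρ f i + (m f (i - 1) / 2 + m f i / 2) := by ring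
    _ = f i := rho_add f i

lemma q_symm (p : ℤ × ℤ) : q f p = q f p.swap := by
  obtain ⟨i, j⟩ := p
  unfold q
  simp only [Prod.swap_prod_mk]
  have hc : (if (Even i ↔ Even j) then ρ f i * ρ f j / c f i else 0)
      = (if (Even j ↔ Even i) then ρ f j * ρ f i / c f j else 0) := by
    by_cases h : Even i ↔ Even j
    · rw [if_pos h, if_pos h.symm, mul_comm, c_congr f h]
    · rw [if_neg h, if_neg fun hh => h hh.symm]
  rw [hc]
  ring

lemma colsum (hf : ∑' k, f k = 1) (j : ℤ) : ∑' i, q f (i, j) = f j := by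
  have : ∀ i, q f (i, j) = q f (j, i) := fun i => q_symm f (i, j)
  rw [tsum_congr this]
  exact rowsum f hf j

lemma sum_q (hf : ∑' k, f k = 1) : ∑' p, q f p = 1 := by
  rw [ENNReal.tsum_prod']
  rw [tsum_congr (rowsum f hf)]
  exact hf

end lemmas

noncomputable def qpmf (f : ℤ → ℝ≥0∞) (hf : ∑' k, f k = 1) : PMF (ℤ × ℤ) :=
  ⟨q f, (Summable.hasSum_iff ENNReal.summable).mpr (sum_q f hf)⟩

lemma qpmf_apply (f : ℤ → ℝ≥0∞) (hf : ∑' k, f k = 1) (p : ℤ × ℤ) : qpmf f hf p = q f p := rfl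

lemma qpmf_map_fst (f : ℤ → ℝ≥0∞) (hf : ∑' k, f k = 1) (i : ℤ) :
    (qpmf f hf).map Prod.fst i = f i := by
  rw [PMF.map_apply, ENNReal.tsum_prod']
  trans (∑' a : ℤ, if a = i then f a else 0)
  · refine tsum_congr fun a => ?_
    by_cases h : a = i
    · subst h
      rw [if_pos rfl]
      refine Eq.trans (tsum_congr fun b => ?_) (rowsum f hf a)
      rw [if_pos rfl]
      rfl
    · rw [if_neg h]
      refine Eq.trans (tsum_congr fun b => ?_) tsum_zero
      rw [if_neg (by simpa using Ne.symm h)]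
  · rw [tsum_eq_single i (fun b hb => if_neg hb), if_pos rfl]

lemma qpmf_map_snd (f : ℤ → ℝ≥0∞) (hf : ∑' k, f k = 1) (j : ℤ) :
    (qpmf f hf).map Prod.snd j = f j := by
  rw [PMF.map_apply, ENNReal.tsum_prod']
  trans (∑' a : ℤ, q f (a, j))
  · refine tsum_congr fun a => ?_
    refine tsum_eq_single j ?_ |>.trans ?_
    · intro b hb
      rw [if_neg (Ne.symm hb)]
    · rw [if_pos rfl]
      rfl
  · exact colsum f hf j

lemma qpmf_map_swap (f : ℤ → ℝ≥0∞) (hf : ∑' k, f k = 1) :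
    (qpmf f hf).map Prod.swap = qpmf f hf := by
  ext p
  rw [PMF.map_apply]
  trans (∑' b : ℤ × ℤ, if p = b then qpmf f hf b.swap else 0)
  · rw [← (Equiv.prodComm ℤ ℤ).tsum_eq]
    refine tsum_congr fun b => ?_
    have hb : (Equiv.prodComm ℤ ℤ) b = b.swap := rfl
    rw [hb, Prod.swap_swap]
    congr!
  · refine (tsum_eq_single p fun b hb => ?_).trans ?_
    · exact if_neg (Ne.symm hb)
    · rw [if_pos rfl]
      show q f p.swap = q f p
      exact (q_symm f p).symm

lemma sum_diag_one (f : ℤ → ℝ≥0∞) (hf : ∑' k, f k = 1) :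
    ∑' p : ℤ × ℤ, ({p : ℤ × ℤ | p.1 - p.2 = 1}).indicator (q f) p = s f / 2 := by
  have hind : ∀ p : ℤ × ℤ, ({p : ℤ × ℤ | p.1 - p.2 = 1}).indicator (q f) p
      = if p.1 - p.2 = 1 then q f p else 0 := by
    intro p
    simp [Set.indicator_apply]
  rw [tsum_congr hind, ENNReal.tsum_prod']
  have hrow : ∀ i : ℤ, ∑' j : ℤ, (if (i, j).1 - (i, j).2 = 1 then q f (i, j) else 0)
      = m f (i - 1) / 2 := by
    intro i
    rw [tsum_eq_single (i - 1)]
    · have h1 : i - (i - 1) = 1 := by ring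
      rw [if_pos h1]
      unfold q
      have hp1 : ¬(i - 1 = i + 1) := by omega
      have hp2 : (i = i - 1 + 1) := by ring
      have hp3 : ¬(Even i ↔ Even (i - 1)) := by
        rw [Int.even_sub_one]
        tauto
      rw [if_neg hp1, if_pos hp2, if_neg hp3]
      simp
    · intro j hj
      rw [if_neg (by omega)]
  rw [tsum_congr hrow]
  simp only [div_eq_mul_inv]
  rw [ENNReal.tsum_mul_right, sum_m_shift]

lemma sum_diag_neg_one (f : ℤ → ℝ≥0∞) (hf : ∑' k, f k = 1) :
    ∑' p : ℤ × ℤ, ({p : ℤ × ℤ | p.1 - p.2 = -1}).indicator (q f) p = s f / 2 := by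
  have hind : ∀ p : ℤ × ℤ, ({p : ℤ × ℤ | p.1 - p.2 = -1}).indicator (q f) p
      = if p.1 - p.2 = -1 then q f p else 0 := by
    intro p
    simp [Set.indicator_apply]
  rw [tsum_congr hind, ENNReal.tsum_prod']
  have hrow : ∀ i : ℤ, ∑' j : ℤ, (if (i, j).1 - (i, j).2 = -1 then q f (i, j) else 0)
      = m f i / 2 := by
    intro i
    rw [tsum_eq_single (i + 1)]
    · have h1 : i - (i + 1) = -1 := by ring
      rw [if_pos h1]
      unfold q
      have hp1 : (i + 1 = i + 1) := rfl
      have hp2 : ¬(i = i + 1 + 1) := by omega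
      have hp3 : ¬(Even i ↔ Even (i + 1)) := by
        rw [Int.even_add_one]
        tauto
      rw [if_pos hp1, if_neg hp2, if_neg hp3]
      simp
    · intro j hj
      rw [if_neg (by omega)]
  rw [tsum_congr hrow]
  simp only [div_eq_mul_inv]
  rw [ENNReal.tsum_mul_right]
  rfl

end Mineka


lemma measurableSet_int {α : Type*} [MeasurableSpace α] [MeasurableSingletonClass α]
    [Countable α] (A : Set α) : MeasurableSet A :=
  (Set.to_countable A).measurableSet

set_option maxHeartbeats 1000000 in
lemma Mineka.tv_eq (μ : Measure ℤ) [IsProbabilityMeasure μ] :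
    tvDist μ (μ.map (· + 1)) = 1 - (s (fun k => μ {k})).toReal := by
  classical
  set ν : Measure ℤ := μ.map (· + 1) with hνdef
  set f : ℤ → ℝ≥0∞ := fun k => μ {k} with hfdef
  have hf : ∑' k, f k = 1 := by
    have h := μ.tsum_indicator_apply_singleton Set.univ MeasurableSet.univ
    simpa using h
  have hfne : ∀ k, f k ≠ ∞ := fun k => measure_ne_top μ _
  have key : ∀ A : Set ℤ, μ A = ∑' k, A.indicator f k := by
    intro A
    conv_lhs => rw [← μ.toPMF_toMeasure]
    rw [PMF.toMeasure_apply _ (measurableSet_int A)]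
    rfl
  have hνA : ∀ A : Set ℤ, ν A = μ ((· + 1) ⁻¹' A) := fun A =>
    Measure.map_apply measurable_from_top (measurableSet_int A)
  -- real valued densities
  set g : ℤ → ℝ := fun k => (f k).toReal with hgdef
  have hg0 : ∀ k, 0 ≤ g k := fun k => ENNReal.toReal_nonneg
  have hgs : Summable g := ENNReal.summable_toReal (by rw [hf]; exact ENNReal.one_ne_top)
  have hgsum : ∑' k, g k = 1 := by
    rw [← ENNReal.tsum_toReal_eq hfne, hf, ENNReal.toReal_one]
  set h : ℤ → ℝ := fun k => g (k - 1) with hhdef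
  have hhs : Summable h := (Equiv.subRight (1 : ℤ)).summable_iff.mpr hgs
  set φ : ℤ → ℝ := fun k => min (g k) (h k) with hφdef
  have hφ0 : ∀ k, 0 ≤ φ k := fun k => le_min (hg0 k) (hg0 (k - 1))
  have hφle : ∀ k, φ k ≤ g k := fun k => min_le_left _ _
  have hφleh : ∀ k, φ k ≤ h k := fun k => min_le_right _ _
  have hφs : Summable φ := Summable.of_nonneg_of_le hφ0 hφle hgs
  have hmne : ∀ k, m f k ≠ ∞ := fun k => ne_top_of_le_ne_top (hfne k) (min_le_left _ _)
  have hφval : ∑' k, φ k = (s f).toReal := by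
    have h1 : (s f).toReal = ∑' k, (m f k).toReal := ENNReal.tsum_toReal_eq hmne
    have h2 : ∀ k, (m f k).toReal = min (g k) (g (k + 1)) := fun k =>
      ENNReal.toReal_min (hfne k) (hfne (k + 1))
    have h3 : ∑' k, φ (k + 1) = ∑' k, φ k := (Equiv.addRight (1 : ℤ)).tsum_eq φ
    have h4 : ∀ k : ℤ, φ (k + 1) = min (g k) (g (k + 1)) := by
      intro k
      show min (g (k + 1)) (g (k + 1 - 1)) = min (g k) (g (k + 1))
      rw [min_comm]
      norm_num
    rw [h1, ← h3, tsum_congr h4]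
    exact tsum_congr fun k => (h2 k).symm
  set u : ℤ → ℝ := fun k => g k - φ k with hudef
  set v : ℤ → ℝ := fun k => h k - φ k with hvdef
  have hu0 : ∀ k, 0 ≤ u k := fun k => sub_nonneg.mpr (hφle k)
  have hv0 : ∀ k, 0 ≤ v k := fun k => sub_nonneg.mpr (hφleh k)
  have hus : Summable u := hgs.sub hφs
  have hvs : Summable v := hhs.sub hφs
  set d : ℝ := 1 - (s f).toReal with hddef
  have husum : ∑' k, u k = d := by
    rw [hudef]
    rw [Summable.tsum_sub hgs hφs, hgsum, hφval]
  have hhsum : ∑' k, h k = 1 := ((Equiv.subRight (1 : ℤ)).tsum_eq g).trans hgsum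
  have hvsum : ∑' k, v k = d := by
    rw [hvdef]
    rw [Summable.tsum_sub hhs hφs, hhsum, hφval]
  have hd0 : 0 ≤ d := husum ▸ tsum_nonneg hu0
  -- set function formulas
  have hμA : ∀ A : Set ℤ, (μ A).toReal = ∑' k, A.indicator g k := by
    intro A
    rw [key A, ENNReal.tsum_toReal_eq]
    · refine tsum_congr fun k => ?_
      by_cases hk : k ∈ A <;> simp [Set.indicator, hk, hgdef]
    · intro k
      by_cases hk : k ∈ A <;> simp [Set.indicator, hk, hfne]
  have hνA' : ∀ A : Set ℤ, (ν A).toReal = ∑' k, A.indicator h k := by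
    intro A
    rw [hνA A, hμA ((· + 1) ⁻¹' A)]
    have he : ∀ k : ℤ, ((· + 1) ⁻¹' A).indicator g k = A.indicator h (k + 1) := by
      intro k
      by_cases hk : k + 1 ∈ A
      · rw [Set.indicator_of_mem hk, Set.indicator_of_mem (by exact hk)]
        show g k = g (k + 1 - 1)
        norm_num
      · rw [Set.indicator_of_notMem hk, Set.indicator_of_notMem (by exact hk)]
    rw [tsum_congr he]
    exact (Equiv.addRight (1 : ℤ)).tsum_eq (A.indicator h)
  -- decomposition over a set
  have hdecomp : ∀ A : Set ℤ,
      (μ A).toReal - (ν A).toReal = (∑' k, A.indicator u k) - ∑' k, A.indicator v k := by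
    intro A
    rw [hμA A, hνA' A]
    have h1 : ∀ k, A.indicator g k = A.indicator φ k + A.indicator u k := by
      intro k
      by_cases hk : k ∈ A
      · simp only [Set.indicator_of_mem hk]
        show g k = φ k + (g k - φ k)
        ring
      · simp [Set.indicator_of_notMem hk]
    have h2 : ∀ k, A.indicator h k = A.indicator φ k + A.indicator v k := by
      intro k
      by_cases hk : k ∈ A
      · simp only [Set.indicator_of_mem hk]
        show h k = φ k + (h k - φ k)
        ring
      · simp [Set.indicator_of_notMem hk]
    rw [tsum_congr h1, tsum_congr h2,
      Summable.tsum_add (hφs.indicator A) (hus.indicator A),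
      Summable.tsum_add (hφs.indicator A) (hvs.indicator A)]
    ring
  have hubnd : ∀ A : Set ℤ, 0 ≤ (∑' k, A.indicator u k) ∧ (∑' k, A.indicator u k) ≤ d := by
    intro A
    constructor
    · exact tsum_nonneg fun k => Set.indicator_nonneg (fun k _ => hu0 k) k
    · rw [← husum]
      exact Summable.tsum_le_tsum (fun k => Set.indicator_le_self' (fun k _ => hu0 k) k)
        (hus.indicator A) hus
  have hvbnd : ∀ A : Set ℤ, 0 ≤ (∑' k, A.indicator v k) ∧ (∑' k, A.indicator v k) ≤ d := by
    intro A
    constructor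
    · exact tsum_nonneg fun k => Set.indicator_nonneg (fun k _ => hv0 k) k
    · rw [← hvsum]
      exact Summable.tsum_le_tsum (fun k => Set.indicator_le_self' (fun k _ => hv0 k) k)
        (hvs.indicator A) hvs
  have bound : ∀ A : Set ℤ, |(μ A).toReal - (ν A).toReal| ≤ d := by
    intro A
    rw [hdecomp A, abs_sub_le_iff]
    constructor
    · linarith [(hubnd A).2, (hvbnd A).1]
    · linarith [(hubnd A).1, (hvbnd A).2]
  set Astar : Set ℤ := {k | h k < g k} with hAstar
  have hindu : Astar.indicator u = u := by
    funext k
    by_cases hk : k ∈ Astar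
    · rw [Set.indicator_of_mem hk]
    · rw [Set.indicator_of_notMem hk]
      have hk' : g k ≤ h k := not_lt.mp hk
      show 0 = g k - min (g k) (h k)
      rw [min_eq_left hk']
      ring
  have hindv : Astar.indicator v = 0 := by
    funext k
    by_cases hk : k ∈ Astar
    · rw [Set.indicator_of_mem hk]
      have hk' : h k ≤ g k := le_of_lt hk
      show h k - min (g k) (h k) = 0
      rw [min_eq_right hk']
      ring
    · rw [Set.indicator_of_notMem hk]
      rfl
  have attain : (μ Astar).toReal - (ν Astar).toReal = d := by
    rw [hdecomp Astar, hindu, hindv]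
    simp [husum]
  -- conclude
  have hne : Nonempty {A : Set ℤ // MeasurableSet A} := ⟨⟨∅, MeasurableSet.empty⟩⟩
  unfold tvDist
  apply le_antisymm
  · exact ciSup_le fun A => bound A
  · have hb : BddAbove (Set.range fun A : {A : Set ℤ // MeasurableSet A} =>
        |(μ A).toReal - (ν A).toReal|) := by
      refine ⟨d, ?_⟩
      rintro x ⟨A, rfl⟩
      exact bound A
    have hle := le_ciSup hb (⟨Astar, measurableSet_int Astar⟩ : {A : Set ℤ // MeasurableSet A})
    calc d = |(μ Astar).toReal - (ν Astar).toReal| := by rw [attain, abs_of_nonneg hd0]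
      _ ≤ _ := hle

/-- Mineka coupling: for any integer valued random variable `X` there
is an exchangeable pair `(Y, Y')`, with both coordinates distributed as `X`, such that
`P(Y - Y' = 1) = P(Y - Y' = -1) = (1/2)(1 - d_TV(L(X), L(X+1)))`. -/
theorem stmt14 {Ω : Type} [MeasurableSpace Ω] (P : Measure Ω) [IsProbabilityMeasure P]
    (X : Ω → ℤ) (hX : Measurable X) :
    ∃ (Ω' : Type) (mΩ' : MeasurableSpace Ω') (Q : Measure Ω') (Y Y' : Ω' → ℤ),
      IsProbabilityMeasure Q ∧ Measurable Y ∧ Measurable Y' ∧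
      Q.map Y = P.map X ∧ Q.map Y' = P.map X ∧
      Q.map (fun ω => (Y ω, Y' ω)) = Q.map (fun ω => (Y' ω, Y ω)) ∧
      (Q {ω | Y ω - Y' ω = 1}).toReal
        = 1 / 2 * (1 - tvDist (P.map X) (P.map fun ω => X ω + 1)) ∧
      (Q {ω | Y ω - Y' ω = -1}).toReal
        = 1 / 2 * (1 - tvDist (P.map X) (P.map fun ω => X ω + 1)) := by
  classical
  set μ' : Measure ℤ := P.map X with hμ'
  have hprob : IsProbabilityMeasure μ' := Measure.isProbabilityMeasure_map hX.aemeasurable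
  set f : ℤ → ℝ≥0∞ := fun k => μ' {k} with hfdef
  have hf : ∑' k, f k = 1 := by
    have h := μ'.tsum_indicator_apply_singleton Set.univ MeasurableSet.univ
    simpa using h
  have hmapshift : P.map (fun ω => X ω + 1) = μ'.map (· + 1) := by
    rw [hμ', Measure.map_map measurable_from_top hX]
    rfl
  have htv : tvDist (P.map X) (P.map fun ω => X ω + 1)
      = 1 - (Mineka.s f).toReal := by
    rw [hmapshift, ← hμ']
    exact Mineka.tv_eq μ'
  have hsne : Mineka.s f ≠ ∞ := Mineka.s_ne_top f hf
  set Q : Measure (ℤ × ℤ) := (Mineka.qpmf f hf).toMeasure with hQ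
  have hmapfst : Q.map Prod.fst = μ' := by
    rw [hQ, PMF.toMeasure_map _ _ measurable_fst]
    have : (Mineka.qpmf f hf).map Prod.fst = μ'.toPMF :=
      PMF.ext fun i => Mineka.qpmf_map_fst f hf i
    rw [this, Measure.toPMF_toMeasure]
  have hmapsnd : Q.map Prod.snd = μ' := by
    rw [hQ, PMF.toMeasure_map _ _ measurable_snd]
    have : (Mineka.qpmf f hf).map Prod.snd = μ'.toPMF :=
      PMF.ext fun j => Mineka.qpmf_map_snd f hf j
    rw [this, Measure.toPMF_toMeasure]
  refine ⟨ℤ × ℤ, inferInstance, Q, Prod.fst, Prod.snd,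
    PMF.toMeasure.isProbabilityMeasure _, measurable_fst, measurable_snd,
    hmapfst, hmapsnd, ?_, ?_, ?_⟩
  · have h1 : (fun ω : ℤ × ℤ => (ω.1, ω.2)) = id := funext fun p => rfl
    have h2 : (fun ω : ℤ × ℤ => (ω.2, ω.1)) = Prod.swap := funext fun p => rfl
    rw [h1, h2, Measure.map_id, hQ, PMF.toMeasure_map _ _ measurable_swap,
      Mineka.qpmf_map_swap]
  · have hev : Q {ω : ℤ × ℤ | ω.1 - ω.2 = 1} = Mineka.s f / 2 := by
      rw [hQ, PMF.toMeasure_apply _ (measurableSet_int _)]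
      exact Mineka.sum_diag_one f hf
    rw [hev, htv, ENNReal.toReal_div]
    norm_num
    ring
  · have hev : Q {ω : ℤ × ℤ | ω.1 - ω.2 = -1} = Mineka.s f / 2 := by
      rw [hQ, PMF.toMeasure_apply _ (measurableSet_int _)]
      exact Mineka.sum_diag_neg_one f hf
    rw [hev, htv, ENNReal.toReal_div]
    norm_num
    ring
end

section
/- Let X₁, …, Xₙ be square-integrable random variables with E Xᵢ = μᵢ, and suppose for each i ∈ {1,…,n} there are sets Aᵢ, Bᵢ ⊆ {1,…,n} such that Xᵢ is independent of {Xⱼ : j ∉ Aᵢ} and {Xⱼ : j ∈ Aᵢ} is independent of {Xⱼ : j ∉ Bᵢ}. Assume |N(Bᵢ)| ≤ θ for every i, where N(Bᵢ) = {j ∈ {1,…,n} : Aⱼ ∩ Bᵢ ≠ ∅}. Then Var( Σ_{i=1}^n (Xᵢ − μᵢ)·Σ_{j ∈ Aᵢ}(Xⱼ − μⱼ) ) ≤ θ·Σ_{i=1}^n E[ ((Xᵢ − μᵢ)·Σ_{j ∈ Aᵢ}(Xⱼ − μⱼ))² ]. -/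
open MeasureTheory ProbabilityTheory Real
open scoped NNReal ENNReal

private lemma memL2_mul_integrable {Ω : Type} [MeasurableSpace Ω] {P : Measure Ω}
    {f g : Ω → ℝ} (hf : MemLp f 2 P) (hg : MemLp g 2 P) :
    Integrable (fun ω => f ω * g ω) P := by
  refine Integrable.mono' ((hf.integrable_sq.add hg.integrable_sq).div_const 2)
    (hf.aestronglyMeasurable.mul hg.aestronglyMeasurable) ?_
  filter_upwards with ω
  rw [Real.norm_eq_abs]
  simp only [Pi.add_apply]
  rcases abs_cases (f ω * g ω) with ⟨h1, -⟩ | ⟨h1, -⟩ <;> rw [h1] <;>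
    nlinarith [sq_nonneg (f ω - g ω), sq_nonneg (f ω + g ω)]

/-- Analytic core: if the centered covariances vanish outside a symmetric relation `c`
whose "degree" is bounded by `θ`, the variance of the sum is at most
`θ` times the sum of the second moments. -/
private lemma stmt16_aux {Ω : Type} [MeasurableSpace Ω] (P : Measure Ω) [IsProbabilityMeasure P]
    {n : ℕ} (Y : Fin n → Ω → ℝ) (hY : ∀ i, MemLp (Y i) 2 P)
    (m : Fin n → ℝ) (hm : ∀ i, ∫ ω, Y i ω ∂P = m i)
    (c : Fin n → Fin n → Prop) [∀ i j, Decidable (c i j)]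
    (hsymm : ∀ i j, c i j → c j i)
    (hzero : ∀ i j, ¬ c i j → ∫ ω, (Y i ω - m i) * (Y j ω - m j) ∂P = 0)
    (θ : ℝ) (hθ : ∀ i, ((Finset.univ.filter fun j => c i j).card : ℝ) ≤ θ) :
    variance (fun ω => ∑ i, Y i ω) P ≤ θ * ∑ i, ∫ ω, (Y i ω) ^ 2 ∂P := by
  classical
  have hWm : ∀ i, MemLp (fun ω => Y i ω - m i) 2 P :=
    fun i => (hY i).sub (memLp_const (m i))
  have hWint : ∀ i j, Integrable (fun ω => (Y i ω - m i) * (Y j ω - m j)) P :=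
    fun i j => memL2_mul_integrable (hWm i) (hWm j)
  have hWsq : ∀ i, Integrable (fun ω => (Y i ω - m i) ^ 2) P := fun i => (hWm i).integrable_sq
  -- variance of the sum as a double sum of centered covariances
  have hSint : ∀ i, Integrable (Y i) P := fun i => (hY i).integrable one_le_two
  have hL2S : MemLp (fun ω => ∑ i, Y i ω) 2 P := memLp_finset_sum _ fun i _ => hY i
  have hμS : ∫ ω, ∑ i, Y i ω ∂P = ∑ i, m i := by
    rw [integral_finset_sum _ fun i _ => hSint i]
    exact Finset.sum_congr rfl fun i _ => hm i
  have hVar : variance (fun ω => ∑ i, Y i ω) P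
      = ∑ i, ∑ j, ∫ ω, (Y i ω - m i) * (Y j ω - m j) ∂P := by
    have h1 : variance (fun ω => ∑ i, Y i ω) P
        = ∫ ω, (∑ i, (Y i ω - m i)) ^ 2 ∂P := by
      rw [variance_eq_integral hL2S.aestronglyMeasurable.aemeasurable]
      congr 1
      funext ω
      simp [Pi.pow_apply, Pi.sub_apply, hμS, Finset.sum_sub_distrib]
    have h2 : ∀ ω : Ω, (∑ i, (Y i ω - m i)) ^ 2
        = ∑ i, ∑ j, (Y i ω - m i) * (Y j ω - m j) := by
      intro ω; rw [sq, Finset.sum_mul_sum]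
    rw [h1]
    simp_rw [h2]
    rw [integral_finset_sum _ fun i _ => integrable_finset_sum _ fun j _ => hWint i j]
    exact Finset.sum_congr rfl fun i _ => integral_finset_sum _ fun j _ => hWint i j
  -- second moment bound for each centered variable
  have hv : ∀ i, ∫ ω, (Y i ω - m i) ^ 2 ∂P ≤ ∫ ω, (Y i ω) ^ 2 ∂P := by
    intro i
    have h1 : ∫ ω, (Y i ω - m i) ^ 2 ∂P = variance (Y i) P := by
      rw [variance_eq_integral (hY i).aestronglyMeasurable.aemeasurable]
      congr 1
      funext ω
      simp [hm i]
    rw [h1]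
    simpa using variance_le_expectation_sq (μ := P) (hY i).aestronglyMeasurable
  have hvnn : ∀ i, (0 : ℝ) ≤ ∫ ω, (Y i ω - m i) ^ 2 ∂P :=
    fun i => integral_nonneg fun ω => sq_nonneg _
  -- bound each covariance term
  have hbound : ∀ i j, ∫ ω, (Y i ω - m i) * (Y j ω - m j) ∂P
      ≤ if c i j then (∫ ω, (Y i ω - m i) ^ 2 ∂P + ∫ ω, (Y j ω - m j) ^ 2 ∂P) / 2 else 0 := by
    intro i j
    by_cases h : c i j
    · rw [if_pos h]
      have hle : ∫ ω, (Y i ω - m i) * (Y j ω - m j) ∂P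
          ≤ ∫ ω, ((Y i ω - m i) ^ 2 + (Y j ω - m j) ^ 2) / 2 ∂P := by
        refine integral_mono (hWint i j) (((hWsq i).add (hWsq j)).div_const 2) fun ω => ?_
        nlinarith [sq_nonneg (Y i ω - m i - (Y j ω - m j))]
      calc ∫ ω, (Y i ω - m i) * (Y j ω - m j) ∂P
          ≤ ∫ ω, ((Y i ω - m i) ^ 2 + (Y j ω - m j) ^ 2) / 2 ∂P := hle
        _ = (∫ ω, (Y i ω - m i) ^ 2 ∂P + ∫ ω, (Y j ω - m j) ^ 2 ∂P) / 2 := by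
            rw [integral_div, integral_add (hWsq i) (hWsq j)]
    · rw [if_neg h, hzero i j h]
  -- combinatorial bookkeeping
  set v : Fin n → ℝ := fun i => ∫ ω, (Y i ω - m i) ^ 2 ∂P with hvdef
  have hsplit : ∀ i j, (if c i j then (v i + v j) / 2 else 0)
      = ((if c i j then v i else 0) + (if c i j then v j else 0)) / 2 := by
    intro i j; by_cases h : c i j <;> simp [h]
  have hswap : ∑ i, ∑ j, (if c i j then v j else 0) = ∑ i, ∑ j, (if c i j then v i else 0) := by
    rw [Finset.sum_comm]
    exact Finset.sum_congr rfl fun i _ => Finset.sum_congr rfl fun j _ =>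
      if_congr ⟨hsymm j i, hsymm i j⟩ rfl rfl
  have hcard : ∀ i, ∑ j, (if c i j then v i else 0)
      = ((Finset.univ.filter fun j => c i j).card : ℝ) * v i := by
    intro i
    rw [← Finset.sum_filter, Finset.sum_const, nsmul_eq_mul]
  calc variance (fun ω => ∑ i, Y i ω) P
      = ∑ i, ∑ j, ∫ ω, (Y i ω - m i) * (Y j ω - m j) ∂P := hVar
    _ ≤ ∑ i, ∑ j, (if c i j then (v i + v j) / 2 else 0) :=
        Finset.sum_le_sum fun i _ => Finset.sum_le_sum fun j _ => hbound i j
    _ = ∑ i, ∑ j, (if c i j then v i else 0) := by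
        simp_rw [hsplit, ← Finset.sum_div, Finset.sum_add_distrib]
        rw [hswap]
        ring
    _ ≤ ∑ i, θ * ∫ ω, (Y i ω) ^ 2 ∂P := by
        refine Finset.sum_le_sum fun i _ => ?_
        rw [hcard i]
        have hθ0 : (0 : ℝ) ≤ θ := le_trans (Nat.cast_nonneg _) (hθ i)
        exact mul_le_mul (hθ i) (hv i) (hvnn i) hθ0
    _ = θ * ∑ i, ∫ ω, (Y i ω) ^ 2 ∂P := (Finset.mul_sum _ _ _).symm

/-- Vanishing of the centered covariance when `A j ∩ B i = ∅`. -/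
private lemma stmt16_cov_zero {Ω : Type} [MeasurableSpace Ω] {P : Measure Ω}
    [IsProbabilityMeasure P]
    {n : ℕ} {X : Fin n → Ω → ℝ} (hX : ∀ i, Measurable (X i))
    (hXL2 : ∀ i, MemLp (X i) 2 P)
    (μi : Fin n → ℝ) (hμi : ∀ i, ∫ ω, X i ω ∂P = μi i)
    (A B : Fin n → Finset (Fin n))
    (hA : ∀ i, IndepFun (X i) (fun ω (j : {j // j ∉ A i}) => X j ω) P)
    (hB : ∀ i, IndepFun (fun ω (j : {j // j ∈ A i}) => X j ω)
                        (fun ω (j : {j // j ∉ B i}) => X j ω) P)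
    (hmom : ∀ i, MemLp (fun ω => (X i ω - μi i) * ∑ j ∈ A i, (X j ω - μi j)) 2 P)
    (i j : Fin n) (hij : ¬ (A j ∩ B i).Nonempty) :
    ∫ ω, ((X i ω - μi i) * ∑ k ∈ A i, (X k ω - μi k)
            - ∫ ω', (X i ω' - μi i) * ∑ k ∈ A i, (X k ω' - μi k) ∂P)
        * ((X j ω - μi j) * ∑ k ∈ A j, (X k ω - μi k)
            - ∫ ω', (X j ω' - μi j) * ∑ k ∈ A j, (X k ω' - μi k) ∂P) ∂P = 0 := by
  classical
  -- degenerate case helper: if `p ∉ A p` then `X p` is a.e. constant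
  have hdeg : ∀ p : Fin n, p ∉ A p → X p =ᵐ[P] fun _ => μi p := by
    intro p hp
    have h1 : IndepFun (X p) (X p) P :=
      (hA p).comp measurable_id (measurable_pi_apply (⟨p, hp⟩ : {j // j ∉ A p}))
    have h3 : ∫ ω, X p ω * X p ω ∂P = (∫ ω, X p ω ∂P) * ∫ ω, X p ω ∂P :=
      h1.integral_fun_mul_eq_mul_integral (hX p).aestronglyMeasurable (hX p).aestronglyMeasurable
    have hintmul : Integrable (fun ω => X p ω * X p ω) P := by
      have := (hXL2 p).integrable_sq
      simpa [sq] using this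
    have hint1 : Integrable (X p) P := (hXL2 p).integrable one_le_two
    have h4 : ∫ ω, (X p ω - μi p) ^ 2 ∂P = 0 := by
      have hre : (fun ω => (X p ω - μi p) ^ 2)
          = fun ω => X p ω * X p ω - 2 * μi p * X p ω + μi p ^ 2 := by
        funext ω; ring
      have hint2 : Integrable (fun ω => X p ω * X p ω - 2 * μi p * X p ω) P :=
        hintmul.sub (hint1.const_mul _)
      have hint3 : Integrable (fun ω => 2 * μi p * X p ω) P := hint1.const_mul _
      rw [hre, integral_add hint2 (integrable_const _),
        integral_sub hintmul hint3, integral_const_mul, h3, hμi p, integral_const]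
      simp
      ring
    have hintsub : Integrable (fun ω => (X p ω - μi p) ^ 2) P :=
      ((hXL2 p).sub (memLp_const (μi p))).integrable_sq
    have h5 : (fun ω => (X p ω - μi p) ^ 2) =ᵐ[P] 0 :=
      (integral_eq_zero_iff_of_nonneg (fun ω => sq_nonneg _) hintsub).mp h4
    filter_upwards [h5] with ω hω
    have hω' : (X p ω - μi p) ^ 2 = 0 := hω
    have := sub_eq_zero.mp (sq_eq_zero_iff.mp hω')
    simpa using this
  have hY : ∀ p, MemLp (fun ω => (X p ω - μi p) * ∑ k ∈ A p, (X k ω - μi k)) 2 P := hmom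
  have hYint : ∀ p, Integrable (fun ω => (X p ω - μi p) * ∑ k ∈ A p, (X k ω - μi k)) P :=
    fun p => (hY p).integrable one_le_two
  have hdegY : ∀ p : Fin n, p ∉ A p →
      (fun ω => (X p ω - μi p) * ∑ k ∈ A p, (X k ω - μi k)) =ᵐ[P] 0 := by
    intro p hp
    filter_upwards [hdeg p hp] with ω hω
    simp [hω]
  -- if one of the two factors in the product is a.e. zero, the integral is zero
  by_cases hi : i ∈ A i
  swap
  · have h0 := hdegY i hi
    have hmz : ∫ ω', (X i ω' - μi i) * ∑ k ∈ A i, (X k ω' - μi k) ∂P = 0 := by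
      rw [integral_congr_ae h0]; simp
    have hprod : (fun ω => ((X i ω - μi i) * ∑ k ∈ A i, (X k ω - μi k)
            - ∫ ω', (X i ω' - μi i) * ∑ k ∈ A i, (X k ω' - μi k) ∂P)
        * ((X j ω - μi j) * ∑ k ∈ A j, (X k ω - μi k)
            - ∫ ω', (X j ω' - μi j) * ∑ k ∈ A j, (X k ω' - μi k) ∂P)) =ᵐ[P] 0 := by
      filter_upwards [h0] with ω hω
      simp only [Pi.zero_apply] at hω ⊢
      rw [hmz, hω]
      ring
    rw [integral_congr_ae hprod]; simp
  by_cases hj : j ∈ A j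
  swap
  · have h0 := hdegY j hj
    have hmz : ∫ ω', (X j ω' - μi j) * ∑ k ∈ A j, (X k ω' - μi k) ∂P = 0 := by
      rw [integral_congr_ae h0]; simp
    have hprod : (fun ω => ((X i ω - μi i) * ∑ k ∈ A i, (X k ω - μi k)
            - ∫ ω', (X i ω' - μi i) * ∑ k ∈ A i, (X k ω' - μi k) ∂P)
        * ((X j ω - μi j) * ∑ k ∈ A j, (X k ω - μi k)
            - ∫ ω', (X j ω' - μi j) * ∑ k ∈ A j, (X k ω' - μi k) ∂P)) =ᵐ[P] 0 := by
      filter_upwards [h0] with ω hω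
      simp only [Pi.zero_apply] at hω ⊢
      rw [hmz, hω]
      ring
    rw [integral_congr_ae hprod]; simp
  -- main case: genuine independence
  have hjB : ∀ k ∈ A j, k ∉ B i := by
    intro k hk hkB
    exact hij ⟨k, Finset.mem_inter.mpr ⟨hk, hkB⟩⟩
  have hjBi : j ∉ B i := hjB j hj
  have hF : Measurable (fun v : ({k // k ∈ A i} → ℝ) =>
      (v ⟨i, hi⟩ - μi i) * ∑ k ∈ (A i).attach, (v k - μi k)) := by
    refine Measurable.mul ((measurable_pi_apply _).sub_const _) ?_
    exact Finset.measurable_sum _ fun k _ => (measurable_pi_apply _).sub_const _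
  have hG : Measurable (fun v : ({k // k ∉ B i} → ℝ) =>
      (v ⟨j, hjBi⟩ - μi j) * ∑ k ∈ (A j).attach, (v ⟨k, hjB k k.2⟩ - μi k)) := by
    refine Measurable.mul ((measurable_pi_apply _).sub_const _) ?_
    exact Finset.measurable_sum _ fun k _ => (measurable_pi_apply _).sub_const _
  have h := (hB i).comp hF hG
  have e1 : ((fun v : ({k // k ∈ A i} → ℝ) =>
        (v ⟨i, hi⟩ - μi i) * ∑ k ∈ (A i).attach, (v k - μi k))
      ∘ (fun ω (k : {k // k ∈ A i}) => X k ω))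
      = fun ω => (X i ω - μi i) * ∑ k ∈ A i, (X k ω - μi k) := by
    funext ω
    simp only [Function.comp_apply]
    congr 1
    exact Finset.sum_attach (A i) (fun k => X k ω - μi k)
  have e2 : ((fun v : ({k // k ∉ B i} → ℝ) =>
        (v ⟨j, hjBi⟩ - μi j) * ∑ k ∈ (A j).attach, (v ⟨k, hjB k k.2⟩ - μi k))
      ∘ (fun ω (k : {k // k ∉ B i}) => X k ω))
      = fun ω => (X j ω - μi j) * ∑ k ∈ A j, (X k ω - μi k) := by
    funext ω
    simp only [Function.comp_apply]
    congr 1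
    exact Finset.sum_attach (A j) (fun k => X k ω - μi k)
  rw [e1, e2] at h
  have h2 : IndepFun
      (fun ω => (X i ω - μi i) * ∑ k ∈ A i, (X k ω - μi k)
        - ∫ ω', (X i ω' - μi i) * ∑ k ∈ A i, (X k ω' - μi k) ∂P)
      (fun ω => (X j ω - μi j) * ∑ k ∈ A j, (X k ω - μi k)
        - ∫ ω', (X j ω' - μi j) * ∑ k ∈ A j, (X k ω' - μi k) ∂P) P :=
    h.comp (measurable_id.sub_const _) (measurable_id.sub_const _)
  have hz1 : ∫ ω, ((X i ω - μi i) * ∑ k ∈ A i, (X k ω - μi k)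
      - ∫ ω', (X i ω' - μi i) * ∑ k ∈ A i, (X k ω' - μi k) ∂P) ∂P = 0 := by
    rw [integral_sub (hYint i) (integrable_const _), integral_const]
    simp
  have h3 := h2.integral_fun_mul_eq_mul_integral
    (((hY i).sub (memLp_const _)).aestronglyMeasurable)
    (((hY j).sub (memLp_const _)).aestronglyMeasurable)
  exact h3.trans (by rw [hz1, zero_mul])

/-- variance bound under local dependence. -/
theorem stmt16 {Ω : Type} [MeasurableSpace Ω] (P : Measure Ω) [IsProbabilityMeasure P]
    (n : ℕ) (X : Fin n → Ω → ℝ) (hX : ∀ i, Measurable (X i))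
    (hXL2 : ∀ i, MemLp (X i) 2 P)
    (μi : Fin n → ℝ) (hμi : ∀ i, ∫ ω, X i ω ∂P = μi i)
    (A B : Fin n → Finset (Fin n))
    (hA : ∀ i, IndepFun (X i) (fun ω (j : {j // j ∉ A i}) => X j ω) P)
    (hB : ∀ i, IndepFun (fun ω (j : {j // j ∈ A i}) => X j ω)
                        (fun ω (j : {j // j ∉ B i}) => X j ω) P)
    (θ : ℝ)
    (hθ : ∀ i, ((Finset.univ.filter fun j => ((A j) ∩ (B i)).Nonempty).card : ℝ) ≤ θ)
    (hmom : ∀ i, MemLp (fun ω => (X i ω - μi i) * ∑ j ∈ A i, (X j ω - μi j)) 2 P) :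
    variance (fun ω => ∑ i, (X i ω - μi i) * ∑ j ∈ A i, (X j ω - μi j)) P
      ≤ θ * ∑ i, ∫ ω, ((X i ω - μi i) * ∑ j ∈ A i, (X j ω - μi j)) ^ 2 ∂P := by
  classical
  refine stmt16_aux P (fun i ω => (X i ω - μi i) * ∑ j ∈ A i, (X j ω - μi j)) hmom
    (fun i => ∫ ω, (X i ω - μi i) * ∑ j ∈ A i, (X j ω - μi j) ∂P) (fun i => rfl)
    (fun i j => (A j ∩ B i).Nonempty ∧ (A i ∩ B j).Nonempty)
    (fun i j h => ⟨h.2, h.1⟩) ?_ θ ?_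
  · intro i j hc
    rw [not_and_or] at hc
    rcases hc with hc | hc
    · exact stmt16_cov_zero hX hXL2 μi hμi A B hA hB hmom i j hc
    · have := stmt16_cov_zero hX hXL2 μi hμi A B hA hB hmom j i hc
      rw [← this]
      congr 1
      funext ω
      ring
  · intro i
    refine le_trans ?_ (hθ i)
    have hsub : (Finset.univ.filter fun j => (A j ∩ B i).Nonempty ∧ (A i ∩ B j).Nonempty)
        ⊆ Finset.univ.filter fun j => (A j ∩ B i).Nonempty :=
      Finset.monotone_filter_right _ fun j _ hj => hj.1
    exact_mod_cast Finset.card_le_card hsub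
end

section
/- Let X₁, …, Xₙ be integrable random variables with E Xᵢ = μᵢ and S = Σ_{i=1}^n Xᵢ, μ = Σ μᵢ. Suppose for each i there is a set Aᵢ ⊆ {1,…,n} with i ∈ Aᵢ such that Xᵢ is independent of {Xⱼ : j ∉ Aᵢ}. Let I be uniformly distributed on {1,…,n} and independent of (X₁,…,Xₙ), and set S' = S − Σ_{j ∈ A_I}(Xⱼ − μⱼ) and G = −n(X_I − μ_I). Then (S, S', G) is a Stein coupling: E[G f(S') − G f(S)] = E[(S − μ) f(S)] for every bounded measurable f: ℝ → ℝ. -/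
open MeasureTheory ProbabilityTheory Real
open scoped NNReal ENNReal

private lemma integrable_of_bdd' {Ω : Type} [MeasurableSpace Ω] {P : Measure Ω}
    [IsProbabilityMeasure P] {g : Ω → ℝ} (hg : AEStronglyMeasurable g P) {C : ℝ}
    (hC : ∀ ω, |g ω| ≤ C) : Integrable g P :=
  (integrable_const C).mono' hg
    (Filter.Eventually.of_forall fun ω => by simpa [Real.norm_eq_abs] using hC ω)

/-- the local-dependence construction
`(S, S - Σ_{j ∈ A_I}(X_j - μ_j), -n(X_I - μ_I))` is a Stein coupling. -/
theorem stmt17 {Ω : Type} [MeasurableSpace Ω] (P : Measure Ω) [IsProbabilityMeasure P]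
    (n : ℕ) (hn : 0 < n)
    (X : Fin n → Ω → ℝ) (hX : ∀ i, Measurable (X i)) (hXint : ∀ i, Integrable (X i) P)
    (μi : Fin n → ℝ) (hμi : ∀ i, ∫ ω, X i ω ∂P = μi i)
    (A : Fin n → Finset (Fin n)) (hAi : ∀ i, i ∈ A i)
    (hA : ∀ i, IndepFun (X i) (fun ω (j : {j // j ∉ A i}) => X j ω) P)
    (I : Ω → Fin n) (hI : Measurable I)
    (hIunif : ∀ i, P {ω | I ω = i} = ((n : ℝ≥0∞))⁻¹)
    (hIindep : IndepFun I (fun ω (j : Fin n) => X j ω) P)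
    (μ : ℝ) (hμ : μ = ∑ i, μi i)
    (S S' G : Ω → ℝ)
    (hS : S = fun ω => ∑ i, X i ω)
    (hS' : S' = fun ω => S ω - ∑ j ∈ A (I ω), (X j ω - μi j))
    (hG : G = fun ω => -(n : ℝ) * (X (I ω) ω - μi (I ω))) :
    ∀ f : ℝ → ℝ, Measurable f → (∃ C, ∀ x, |f x| ≤ C) →
      ∫ ω, G ω * (f (S' ω) - f (S ω)) ∂P = ∫ ω, (S ω - μ) * f (S ω) ∂P := by
  intro f hf hfC
  obtain ⟨C, hC⟩ := hfC
  -- the vector of the Xᵢ's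
  set Xv : Ω → (Fin n → ℝ) := fun ω j => X j ω with hXvdef
  have hXvm : Measurable Xv := measurable_pi_lambda _ hX
  have hSm : Measurable S := by
    rw [hS]; exact Finset.measurable_sum _ fun i _ => hX i
  -- local sums
  set T : Fin n → Ω → ℝ := fun i ω => ∑ j ∈ A i, (X j ω - μi j) with hTdef
  have hTm : ∀ i, Measurable (T i) :=
    fun i => Finset.measurable_sum _ fun j _ => (hX j).sub measurable_const
  -- the integrand pieces
  set H : Fin n → Ω → ℝ :=
    fun i ω => (X i ω - μi i) * (f (S ω - T i ω) - f (S ω)) with hHdef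
  have hWm : ∀ i, Measurable (fun ω => f (S ω - T i ω) - f (S ω)) :=
    fun i => (hf.comp (hSm.sub (hTm i))).sub (hf.comp hSm)
  have hWbd : ∀ i ω, ‖f (S ω - T i ω) - f (S ω)‖ ≤ C + C := by
    intro i ω
    calc ‖f (S ω - T i ω) - f (S ω)‖ ≤ ‖f (S ω - T i ω)‖ + ‖f (S ω)‖ := norm_sub_le _ _
    _ ≤ C + C := by
        have h1 := hC (S ω - T i ω); have h2 := hC (S ω)
        rw [Real.norm_eq_abs, Real.norm_eq_abs]; exact add_le_add h1 h2
  have hXmu_int : ∀ i, Integrable (fun ω => X i ω - μi i) P :=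
    fun i => (hXint i).sub (integrable_const _)
  have hHint : ∀ i, Integrable (H i) P := by
    intro i
    have := Integrable.bdd_mul (hXmu_int i) (hWm i).aestronglyMeasurable
      (Filter.Eventually.of_forall (hWbd i))
    exact this.congr (Filter.Eventually.of_forall fun ω => mul_comm _ _)
  -- H i as a function of the vector Xv
  set Hf : Fin n → (Fin n → ℝ) → ℝ := fun i x =>
    (x i - μi i) * (f ((∑ j, x j) - ∑ j ∈ A i, (x j - μi j)) - f (∑ j, x j)) with hHfdef
  have hHfm : ∀ i, Measurable (Hf i) := by
    intro i
    have hsum : Measurable fun x : Fin n → ℝ => ∑ j, x j :=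
      Finset.measurable_sum _ fun j _ => measurable_pi_apply j
    have hsum2 : Measurable fun x : Fin n → ℝ => ∑ j ∈ A i, (x j - μi j) :=
      Finset.measurable_sum _ fun j _ => (measurable_pi_apply j).sub measurable_const
    exact ((measurable_pi_apply i).sub measurable_const).mul
      ((hf.comp (hsum.sub hsum2)).sub (hf.comp hsum))
  have hHcomp : ∀ i ω, H i ω = Hf i (Xv ω) := by
    intro i ω
    simp only [hHdef, hHfdef, hXvdef, hTdef, hS]
  -- Step 1: pointwise decomposition of the LHS integrand, summing over the value of I
  have hpt : ∀ ω, G ω * (f (S' ω) - f (S ω)) =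
      ∑ i, (if I ω = i then (1:ℝ) else 0) * (-(n:ℝ) * H i ω) := by
    intro ω
    have : ∀ i, (if I ω = i then (1:ℝ) else 0) * (-(n:ℝ) * H i ω)
        = if I ω = i then -(n:ℝ) * H i ω else 0 := by
      intro i; split <;> simp
    simp_rw [this, Finset.sum_ite_eq]
    simp only [Finset.mem_univ, if_true, hG, hS', hHdef, hTdef]
    ring
  -- Step 2: integrability of each term
  have hterm_int : ∀ i, Integrable
      (fun ω => (if I ω = i then (1:ℝ) else 0) * (-(n:ℝ) * H i ω)) P := by
    intro i
    have him : Measurable fun ω => (if I ω = i then (1:ℝ) else 0) :=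
      Measurable.ite (hI (measurableSet_singleton i)) measurable_const measurable_const
    refine Integrable.bdd_mul (c := 1) (((hHint i).const_mul _)) him.aestronglyMeasurable ?_
    refine Filter.Eventually.of_forall fun ω => ?_
    split <;> simp
  -- Step 3: independence of I and Xv lets us factor each term
  have hfactor : ∀ i,
      ∫ ω, (if I ω = i then (1:ℝ) else 0) * (-(n:ℝ) * H i ω) ∂P
        = - ∫ ω, H i ω ∂P := by
    intro i
    have hgm : Measurable (fun k : Fin n => if k = i then (1:ℝ) else 0) :=
      Measurable.ite (measurableSet_eq) measurable_const measurable_const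
    have hψm : Measurable (fun x => -(n:ℝ) * Hf i x) := (hHfm i).const_mul _
    have hind : IndepFun (fun ω => if I ω = i then (1:ℝ) else 0)
        (fun ω => -(n:ℝ) * Hf i (Xv ω)) P := hIindep.comp hgm hψm
    have h1 : Integrable (fun ω => if I ω = i then (1:ℝ) else 0) P := by
      refine integrable_of_bdd' ?_ (C := 1) fun ω => by split <;> simp
      exact (Measurable.ite (hI (measurableSet_singleton i)) measurable_const
        measurable_const).aestronglyMeasurable
    have h2 : Integrable (fun ω => -(n:ℝ) * Hf i (Xv ω)) P := by
      have := (hHint i).const_mul (-(n:ℝ))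
      refine this.congr (Filter.Eventually.of_forall fun ω => ?_)
      simp only [hHcomp i ω]
    have key := hind.integral_mul_eq_mul_integral h1.aestronglyMeasurable h2.aestronglyMeasurable
    have heq : (fun ω => (if I ω = i then (1:ℝ) else 0) * (-(n:ℝ) * H i ω)) =
        (fun ω => if I ω = i then (1:ℝ) else 0) * (fun ω => -(n:ℝ) * Hf i (Xv ω)) := by
      funext ω; simp [hHcomp i ω]
    rw [heq, key]
    -- compute ∫ indicator = 1/n
    have hind_eq : (fun ω => if I ω = i then (1:ℝ) else 0)
        = Set.indicator (I ⁻¹' {i}) (fun _ => (1:ℝ)) := by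
      funext ω
      by_cases h : I ω = i <;> simp [Set.indicator, h]
    have hPi : P (I ⁻¹' {i}) = ((n : ℝ≥0∞))⁻¹ := by
      rw [← hIunif i]; rfl
    have hint1 : ∫ ω, (if I ω = i then (1:ℝ) else 0) ∂P = (n : ℝ)⁻¹ := by
      rw [hind_eq, integral_indicator_const _ (hI (measurableSet_singleton i)), measureReal_def, hPi]
      simp [ENNReal.toReal_inv]
    have hint2 : ∫ ω, -(n:ℝ) * Hf i (Xv ω) ∂P = -(n:ℝ) * ∫ ω, H i ω ∂P := by
      rw [show (fun ω => -(n:ℝ) * Hf i (Xv ω)) = fun ω => -(n:ℝ) * H i ω from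
        funext fun ω => by rw [← hHcomp i ω]]
      exact integral_const_mul _ _
    rw [show integral P (fun ω => if I ω = i then (1:ℝ) else 0) = (n:ℝ)⁻¹ from hint1,
      show integral P (fun ω => -(n:ℝ) * Hf i (Xv ω)) = -(n:ℝ) * ∫ ω, H i ω ∂P from hint2]
    have hn' : (n : ℝ) ≠ 0 := Nat.cast_ne_zero.mpr hn.ne'
    field_simp
  -- integrability of the split pieces
  have hint_fS : ∀ i, Integrable (fun ω => (X i ω - μi i) * f (S ω)) P := by
    intro i
    have := Integrable.bdd_mul (hXmu_int i) (hf.comp hSm).aestronglyMeasurable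
      (Filter.Eventually.of_forall fun ω => by rw [Real.norm_eq_abs]; exact hC (S ω))
    exact this.congr (Filter.Eventually.of_forall fun ω => mul_comm _ _)
  have hint_fST : ∀ i, Integrable (fun ω => (X i ω - μi i) * f (S ω - T i ω)) P := by
    intro i
    have := Integrable.bdd_mul (hXmu_int i)
      (hf.comp (hSm.sub (hTm i))).aestronglyMeasurable
      (Filter.Eventually.of_forall fun ω => by rw [Real.norm_eq_abs]; exact hC (S ω - T i ω))
    exact this.congr (Filter.Eventually.of_forall fun ω => mul_comm _ _)
  -- Step 4: the "prelimit" term vanishes by local independence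
  have hzero : ∀ i, ∫ ω, (X i ω - μi i) * f (S ω - T i ω) ∂P = 0 := by
    intro i
    set c : ℝ := ∑ j ∈ A i, μi j with hc
    have hST : ∀ ω, S ω - T i ω = (∑ j : {j // j ∉ A i}, X (j : Fin n) ω) + c := by
      intro ω
      have h1 : (∑ j : {j // j ∉ A i}, X (j : Fin n) ω) = ∑ j ∈ (A i)ᶜ, X j ω := by
        rw [← Finset.sum_coe_sort ((A i)ᶜ) (fun j => X j ω)]
        exact Fintype.sum_equiv
          (Equiv.subtypeEquivRight fun x => (Finset.mem_compl (s := A i)).symm)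
          _ _ fun j => rfl
      have h2 : ∑ j ∈ A i, X j ω + ∑ j ∈ (A i)ᶜ, X j ω = ∑ j, X j ω :=
        Finset.sum_add_sum_compl _ _
      have h3 : T i ω = (∑ j ∈ A i, X j ω) - c := by
        simp only [hTdef, Finset.sum_sub_distrib, hc]
      rw [h1, hS, h3]
      simp only
      linarith [h2]
    set ψ : ({j // j ∉ A i} → ℝ) → ℝ := fun v => f ((∑ j, v j) + c) with hψ
    have hψm : Measurable ψ :=
      hf.comp ((Finset.measurable_sum _ fun j _ => measurable_pi_apply j).add_const c)
    have hφm : Measurable (fun x : ℝ => x - μi i) := measurable_id.sub_const _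
    have hind := (hA i).comp hφm hψm
    have hYm : Measurable (fun ω (j : {j // j ∉ A i}) => X (j : Fin n) ω) :=
      measurable_pi_lambda _ fun j => hX j
    have h2int : Integrable
        (fun ω => ψ (fun j : {j // j ∉ A i} => X (j : Fin n) ω)) P := by
      refine integrable_of_bdd' (hψm.comp hYm).aestronglyMeasurable (C := C) fun ω => ?_
      exact hC _
    have h1int : Integrable ((fun x : ℝ => x - μi i) ∘ X i) P := hXmu_int i
    have key := hind.integral_mul_eq_mul_integral h1int.aestronglyMeasurable h2int.aestronglyMeasurable
    have hzero1 : ∫ ω, ((fun x : ℝ => x - μi i) ∘ X i) ω ∂P = 0 := by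
      have : ∫ ω, (X i ω - μi i) ∂P = 0 := by
        rw [integral_sub (hXint i) (integrable_const _), hμi i]
        simp
      simpa [Function.comp] using this
    have heq : (fun ω => (X i ω - μi i) * f (S ω - T i ω)) =
        ((fun x : ℝ => x - μi i) ∘ X i) *
          (ψ ∘ fun ω (j : {j // j ∉ A i}) => X (j : Fin n) ω) := by
      funext ω
      simp only [Pi.mul_apply, Function.comp_apply, hψ, hST ω]
    rw [heq, key, hzero1, zero_mul]
  -- Step 5: assemble everything
  calc ∫ ω, G ω * (f (S' ω) - f (S ω)) ∂P
      = ∫ ω, ∑ i, (if I ω = i then (1:ℝ) else 0) * (-(n:ℝ) * H i ω) ∂P :=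
        integral_congr_ae (Filter.Eventually.of_forall fun ω => hpt ω)
    _ = ∑ i, ∫ ω, (if I ω = i then (1:ℝ) else 0) * (-(n:ℝ) * H i ω) ∂P :=
        integral_finset_sum _ fun i _ => hterm_int i
    _ = ∑ i, - ∫ ω, H i ω ∂P := Finset.sum_congr rfl fun i _ => hfactor i
    _ = ∑ i, ∫ ω, (X i ω - μi i) * f (S ω) ∂P := by
        refine Finset.sum_congr rfl fun i _ => ?_
        have hsplit : ∫ ω, H i ω ∂P
            = (∫ ω, (X i ω - μi i) * f (S ω - T i ω) ∂P)
              - ∫ ω, (X i ω - μi i) * f (S ω) ∂P := by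
          rw [← integral_sub (hint_fST i) (hint_fS i)]
          refine integral_congr_ae (Filter.Eventually.of_forall fun ω => ?_)
          simp only [hHdef]; ring
        rw [hsplit, hzero i]
        ring
    _ = ∫ ω, ∑ i, (X i ω - μi i) * f (S ω) ∂P :=
        (integral_finset_sum _ fun i _ => hint_fS i).symm
    _ = ∫ ω, (S ω - μ) * f (S ω) ∂P := by
        refine integral_congr_ae (Filter.Eventually.of_forall fun ω => ?_)
        show ∑ i, (X i ω - μi i) * f (S ω) = (S ω - μ) * f (S ω)
        rw [← Finset.sum_mul, Finset.sum_sub_distrib, hS, hμ]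
end
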